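/- arXiv:1408.6774 — 9 statements merged into one kernel-verified Lean document; each statement's English description precedes it below -/
import Mathlib

section
/- Let A ∈ ℝ^{n×n} and b ∈ ℝ^n. The max-plus Bellman equation x = (A ⊗ x) ⊕ b has a solution x ∈ ℝ^n if and only if ρ(A) ≤ 0. -/
open Finset

/-- Max-plus matrix-vector product: `(A ⊗ x)_i = max_j (a_{ij} + x_j)`. -/
noncomputable def mpMulVec {ι κ : Type*} [Fintype κ] (A : ι → κ → ℝ) (x : κ → ℝ) (i : ι) : ℝ :=
  ⨆ j, (A i j + x j)

/-- Max-plus matrix-matrix product: `(A ⊗ B)_{ik} = max_j (a_{ij} + b_{jk})`. -/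
noncomputable def mpMul {ι κ τ : Type*} [Fintype κ] (A : ι → κ → ℝ) (B : κ → τ → ℝ)
    (i : ι) (k : τ) : ℝ :=
  ⨆ j, (A i j + B j k)

/-- `mpPow1 A s` is the `(s+1)`-st max-plus power of `A`, i.e. `A^{⊗(s+1)}`. -/
noncomputable def mpPow1 {ι : Type*} [Fintype ι] (A : ι → ι → ℝ) : ℕ → ι → ι → ℝ
  | 0 => A
  | (k + 1) => mpMul A (mpPow1 A k)

/-- Weight of the walk `P 0 → P 1 → ⋯ → P len` in the complete weighted digraph `D(B)`. -/
noncomputable def walkWeight {ι : Type*} (B : ι → ι → ℝ) (len : ℕ) (P : Fin (len + 1) → ι) : ℝ :=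
  ∑ t : Fin len, B (P t.castSucc) (P t.succ)

/-- The maximum cycle mean `ρ(A)`: the maximum over all cycles (closed walks of length
`1 ≤ k ≤ n`) of the average weight of the cycle. -/
noncomputable def maxCycleMean {ι : Type*} [Fintype ι] (A : ι → ι → ℝ) : ℝ :=
  sSup { r | ∃ k, 1 ≤ k ∧ k ≤ Fintype.card ι ∧
    ∃ P : Fin (k + 1) → ι, P 0 = P (Fin.last k) ∧ r = walkWeight A k P / (k : ℝ) }

/-- Kleene star of `A` (meaningful when `ρ(A) ≤ 0`):
`A*_{ii} = max(0, max_{1 ≤ k ≤ n-1} (A^{⊗k})_{ii})` and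
`A*_{ij} = max_{1 ≤ k ≤ n-1} (A^{⊗k})_{ij}` for `i ≠ j`. -/
noncomputable def kleeneStar {ι : Type*} [Fintype ι] [DecidableEq ι] (A : ι → ι → ℝ)
    (i j : ι) : ℝ :=
  if i = j then max 0 (⨆ m : Fin (Fintype.card ι - 1), mpPow1 A (m : ℕ) i i)
  else ⨆ m : Fin (Fintype.card ι - 1), mpPow1 A (m : ℕ) i j

/-- Max-Łukasiewicz matrix-vector product: `(A ⊗_L x)_i = max_j max(0, a_{ij} + x_j - 1)`. -/
noncomputable def lukMulVec {ι κ : Type*} [Fintype κ] (A : ι → κ → ℝ) (x : κ → ℝ) (i : ι) : ℝ :=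
  ⨆ j, max 0 (A i j + x j - 1)

/-- Max-Łukasiewicz scalar action: `(λ ⊗_L x)_i = max(0, λ + x_i - 1)`. -/
noncomputable def lukSMul {ι : Type*} (lam : ℝ) (x : ι → ℝ) (i : ι) : ℝ :=
  max 0 (lam + x i - 1)

/-- Max-Łukasiewicz matrix-matrix product: `(A ⊗_L B)_{ik} = max_j max(0, a_{ij} + b_{jk} - 1)`. -/
noncomputable def lukMul {ι κ τ : Type*} [Fintype κ] (A : ι → κ → ℝ) (B : κ → τ → ℝ)
    (i : ι) (k : τ) : ℝ :=
  ⨆ j, max 0 (A i j + B j k - 1)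

/-- `lukPow1 A s` is the `(s+1)`-st Łukasiewicz power of `A`, i.e. `A^{⊗_L (s+1)}`. -/
noncomputable def lukPow1 {ι : Type*} [Fintype ι] (A : ι → ι → ℝ) : ℕ → ι → ι → ℝ
  | 0 => A
  | (t + 1) => lukMul A (lukPow1 A t)

/-- Max-plus matrix-vector product of a real matrix with a vector over `ℝ ∪ {-∞}` (`EReal`). -/
noncomputable def mpMulVecE {ι κ : Type*} [Fintype κ] (A : ι → κ → ℝ) (v : κ → EReal)
    (i : ι) : EReal :=
  ⨆ j, ((A i j : EReal) + v j)

/-- Node `i` of the weighted digraph `D(B)` is secure if every walk starting at `i` has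
nonpositive weight. -/
def SecureNode {ι : Type*} (B : ι → ι → ℝ) (i : ι) : Prop :=
  ∀ (len : ℕ) (P : Fin (len + 1) → ι), P 0 = i → walkWeight B len P ≤ 0

/-- The partition `(K, L)` of `{1,…,n}` is secure with respect to `D(B)` (with parameter `λ`):
if `L = ∅` this means `D(B)` is `λ`-secure (every walk has weight `≤ λ`); otherwise it means
that every walk starting in `L` whose all other nodes lie in `K` has nonpositive weight.
(If `L` is everything, the latter condition holds trivially, matching the convention.) -/
def SecurePartition {n : ℕ} (B : Fin n → Fin n → ℝ) (lam : ℝ) (K L : Finset (Fin n)) : Prop :=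
  if L = ∅ then
    ∀ (len : ℕ) (P : Fin (len + 1) → Fin n), walkWeight B len P ≤ lam
  else
    ∀ (len : ℕ) (P : Fin (len + 1) → Fin n),
      P 0 ∈ L → (∀ t : Fin (len + 1), t ≠ 0 → P t ∈ K) → walkWeight B len P ≤ 0

/-- auxiliary walk weight on ℕ-indexed walks -/
noncomputable def wgt {n : ℕ} (A : Fin n → Fin n → ℝ) (len : ℕ) (P : ℕ → Fin n) : ℝ :=
  ∑ t ∈ Finset.range len, A (P t) (P (t + 1))

lemma wgt_add {n : ℕ} (A : Fin n → Fin n → ℝ) (a c : ℕ) (P : ℕ → Fin n) :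
    wgt A (a + c) P = wgt A a P + wgt A c (fun u => P (a + u)) := by
  unfold wgt
  rw [Finset.sum_range_add]
  simp [Nat.add_assoc]

lemma walkWeight_eq_wgt {n : ℕ} (A : Fin n → Fin n → ℝ) {len : ℕ} (P : Fin (len + 1) → Fin n)
    (Pt : ℕ → Fin n) (h : ∀ t (ht : t ≤ len), Pt t = P ⟨t, Nat.lt_succ_of_le ht⟩) :
    walkWeight A len P = wgt A len Pt := by
  unfold walkWeight wgt
  rw [← Fin.sum_univ_eq_sum_range (fun t => A (Pt t) (Pt (t + 1))) len]
  refine Finset.sum_congr rfl fun t _ => ?_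
  have ht := t.isLt
  rw [h t (by omega), h (t + 1) (by omega)]
  rfl

lemma cycle_nonpos {n : ℕ} (hn : 0 < n) (A : Fin n → Fin n → ℝ) (hρ : maxCycleMean A ≤ 0)
    {k : ℕ} (hk1 : 1 ≤ k) (hkn : k ≤ n) (Pt : ℕ → Fin n) (hc : Pt k = Pt 0) :
    wgt A k Pt ≤ 0 := by
  haveI : Nonempty (Fin n) := ⟨⟨0, hn⟩⟩
  set C := ⨆ p : Fin n × Fin n, A p.1 p.2 with hCdef
  have hC : ∀ i j, A i j ≤ C := fun i j =>
    le_ciSup (f := fun p : Fin n × Fin n => A p.1 p.2)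
      (Set.Finite.bddAbove (Set.finite_range _)) (i, j)
  set S : Set ℝ := { r | ∃ k, 1 ≤ k ∧ k ≤ Fintype.card (Fin n) ∧
    ∃ P : Fin (k + 1) → Fin n, P 0 = P (Fin.last k) ∧ r = walkWeight A k P / (k : ℝ) } with hSdef
  have hbdd : BddAbove S := by
    refine ⟨C, ?_⟩
    rintro r ⟨m, hm1, hmn, P, hP, rfl⟩
    have hw : walkWeight A m P ≤ m * C := by
      unfold walkWeight
      calc ∑ t : Fin m, A (P t.castSucc) (P t.succ) ≤ ∑ _t : Fin m, C :=
            Finset.sum_le_sum fun t _ => hC _ _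
        _ = m * C := by simp [Finset.sum_const, Finset.card_univ, nsmul_eq_mul]
    have hmpos : (0 : ℝ) < m := by exact_mod_cast hm1
    rw [div_le_iff₀ hmpos, mul_comm]
    exact hw
  have hmem : wgt A k Pt / (k : ℝ) ∈ S := by
    refine ⟨k, hk1, by simpa using hkn, fun u => Pt ↑u, ?_, ?_⟩
    · simpa using hc.symm
    · rw [walkWeight_eq_wgt A _ Pt (fun t ht => rfl)]
  have hle : wgt A k Pt / (k : ℝ) ≤ maxCycleMean A := le_csSup hbdd hmem
  have hkpos : (0 : ℝ) < k := by exact_mod_cast hk1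
  have h0 : wgt A k Pt / (k : ℝ) ≤ 0 := hle.trans hρ
  rw [div_le_iff₀ hkpos] at h0
  simpa using h0

lemma reduce_walk {n : ℕ} (hn : 0 < n) (A : Fin n → Fin n → ℝ)
    (hcyc : ∀ k, 1 ≤ k → k ≤ n → ∀ P : ℕ → Fin n, P k = P 0 → wgt A k P ≤ 0) :
    ∀ len (P : ℕ → Fin n), ∃ len' ≤ n - 1, ∃ P' : ℕ → Fin n,
      P' 0 = P 0 ∧ P' len' = P len ∧ wgt A len P ≤ wgt A len' P' := by
  intro len
  induction len using Nat.strong_induction_on with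
  | _ len ih =>
    intro P
    by_cases hlen : len ≤ n - 1
    · exact ⟨len, hlen, P, rfl, rfl, le_rfl⟩
    · have hn_le : n ≤ len := by omega
      obtain ⟨s, t, hst, htn, heq⟩ : ∃ s t, s < t ∧ t ≤ n ∧ P s = P t := by
        obtain ⟨u, v, huv, he⟩ := Fintype.exists_ne_map_eq_of_card_lt
          (fun u : Fin (n + 1) => P ↑u) (by simp)
        have hu := u.isLt; have hv := v.isLt
        rcases lt_or_gt_of_ne (show (u : ℕ) ≠ v from fun h => huv (Fin.ext h)) with h | h
        · exact ⟨u, v, h, by omega, he⟩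
        · exact ⟨v, u, h, by omega, he.symm⟩
      set c := t - s with hc
      set d := len - t with hd
      set P' : ℕ → Fin n := fun u => if u ≤ s then P u else P (u + c) with hP'
      have hshift : ∀ u, P' (s + u) = P (t + u) := by
        intro u
        rcases Nat.eq_zero_or_pos u with rfl | hu
        · simp only [hP', Nat.add_zero, le_refl, if_pos, heq]
        · simp only [hP', if_neg (show ¬ (s + u ≤ s) by omega)]
          congr 1; omega
      have h1 : wgt A len P
          = wgt A s P + wgt A c (fun u => P (s + u)) + wgt A d (fun u => P (t + u)) := by
        have hlen_eq : len = s + c + d := by omega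
        rw [hlen_eq, wgt_add, wgt_add]
        congr 1
        unfold wgt
        refine Finset.sum_congr rfl fun u _ => ?_
        dsimp only
        rw [show s + c + u = t + u from by omega, show s + c + (u + 1) = t + (u + 1) from by omega]
      have h2 : wgt A (s + d) P' = wgt A s P + wgt A d (fun u => P (t + u)) := by
        rw [wgt_add]
        congr 1
        · unfold wgt
          refine Finset.sum_congr rfl fun u hu => ?_
          have hu' : u < s := Finset.mem_range.mp hu
          rw [show P' u = P u from by simp only [hP', if_pos (show u ≤ s by omega)],
            show P' (u + 1) = P (u + 1) from by simp only [hP', if_pos (show u + 1 ≤ s by omega)]]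
        · unfold wgt
          refine Finset.sum_congr rfl fun u _ => ?_
          dsimp only
          rw [hshift u, hshift (u + 1)]
      have h3 : wgt A c (fun u => P (s + u)) ≤ 0 := by
        refine hcyc c (by omega) (by omega) _ ?_
        show P (s + c) = P (s + 0)
        rw [show s + c = t from by omega, show s + 0 = s from rfl, heq]
      have hlt : s + d < len := by omega
      obtain ⟨len', hlen', P'', h0, he, hle⟩ := ih (s + d) hlt P'
      refine ⟨len', hlen', P'', ?_, ?_, ?_⟩
      · rw [h0]; simp only [hP', if_pos (Nat.zero_le s)]
      · rw [he]
        by_cases hsd : s + d ≤ s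
        · have hd0 : d = 0 := by omega
          simp only [hP', if_pos hsd]
          rw [show s + d = s from by omega, heq, show t = len from by omega]
        · simp only [hP', if_neg hsd]
          congr 1; omega
      · calc wgt A len P
            = wgt A s P + wgt A c (fun u => P (s + u)) + wgt A d (fun u => P (t + u)) := h1
          _ ≤ wgt A s P + 0 + wgt A d (fun u => P (t + u)) := by linarith
          _ = wgt A (s + d) P' := by rw [h2]; ring
          _ ≤ wgt A len' P'' := hle

/-- the Bellman equation `x = (A ⊗ x) ⊕ b` has a real solution iff `ρ(A) ≤ 0`. -/
theorem stmt1 {n : ℕ} (hn : 0 < n) (A : Fin n → Fin n → ℝ) (b : Fin n → ℝ) :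
    (∃ x : Fin n → ℝ, ∀ i, x i = max (mpMulVec A x i) (b i)) ↔ maxCycleMean A ≤ 0 := by
  haveI : Nonempty (Fin n) := ⟨⟨0, hn⟩⟩
  constructor
  · rintro ⟨x, hx⟩
    have hxA : ∀ i j, A i j + x j ≤ x i := by
      intro i j
      calc A i j + x j ≤ mpMulVec A x i :=
            le_ciSup (f := fun j => A i j + x j) (Set.Finite.bddAbove (Set.finite_range _)) j
        _ ≤ max (mpMulVec A x i) (b i) := le_max_left _ _
        _ = x i := (hx i).symm
    refine Real.sSup_le ?_ le_rfl
    rintro r ⟨k, hk1, hkn, P, hP, rfl⟩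
    set Pt : ℕ → Fin n := fun t => P ⟨min t k, by omega⟩ with hPt
    have he : walkWeight A k P = wgt A k Pt := by
      refine walkWeight_eq_wgt A P Pt fun t ht => ?_
      simp only [hPt]
      congr 1
      exact Fin.ext (by simp [min_eq_left ht])
    have hkey : wgt A k Pt ≤ x (Pt 0) - x (Pt k) := by
      unfold wgt
      calc ∑ t ∈ Finset.range k, A (Pt t) (Pt (t + 1))
          ≤ ∑ t ∈ Finset.range k, (x (Pt t) - x (Pt (t + 1))) :=
            Finset.sum_le_sum fun t _ => by linarith [hxA (Pt t) (Pt (t + 1))]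
        _ = x (Pt 0) - x (Pt k) := Finset.sum_range_sub' (fun t => x (Pt t)) k
    have h0 : Pt 0 = P 0 := by
      simp only [hPt]; congr 1
    have hk : Pt k = P (Fin.last k) := by
      simp only [hPt]; congr 1; exact Fin.ext (by simp)
    rw [h0, hk, ← hP] at hkey
    have hw : walkWeight A k P ≤ 0 := by rw [he]; linarith
    exact div_nonpos_of_nonpos_of_nonneg hw (Nat.cast_nonneg k)
  · intro hρ
    have hcyc : ∀ k, 1 ≤ k → k ≤ n → ∀ P : ℕ → Fin n, P k = P 0 → wgt A k P ≤ 0 :=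
      fun k hk1 hkn P hc => cycle_nonpos hn A hρ hk1 hkn P hc
    set C := ⨆ p : Fin n × Fin n, A p.1 p.2 with hCdef
    have hC : ∀ i j, A i j ≤ C := fun i j =>
      le_ciSup (f := fun p : Fin n × Fin n => A p.1 p.2)
        (Set.Finite.bddAbove (Set.finite_range _)) (i, j)
    set B := ⨆ j, b j with hBdef
    have hB : ∀ j, b j ≤ B := fun j =>
      le_ciSup (f := b) (Set.Finite.bddAbove (Set.finite_range _)) j
    set S : Fin n → Set ℝ := fun i =>
      { w | ∃ len ≤ n - 1, ∃ P : ℕ → Fin n, P 0 = i ∧ w = wgt A len P + b (P len) } with hSdef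
    have hne : ∀ i, (S i).Nonempty :=
      fun i => ⟨b i, 0, Nat.zero_le _, fun _ => i, rfl, by simp [wgt]⟩
    have hbdd : ∀ i, BddAbove (S i) := by
      intro i
      refine ⟨(n - 1 : ℕ) * max C 0 + B, ?_⟩
      rintro w ⟨len, hlen, P, hP0, rfl⟩
      have h1 : wgt A len P ≤ (len : ℝ) * max C 0 := by
        unfold wgt
        calc ∑ t ∈ Finset.range len, A (P t) (P (t + 1))
            ≤ ∑ _t ∈ Finset.range len, max C 0 :=
              Finset.sum_le_sum fun t _ => (hC _ _).trans (le_max_left _ _)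
          _ = (len : ℝ) * max C 0 := by simp [Finset.sum_const, nsmul_eq_mul]
      have h2 : (len : ℝ) * max C 0 ≤ (n - 1 : ℕ) * max C 0 :=
        mul_le_mul_of_nonneg_right (Nat.cast_le.mpr hlen) (le_max_right _ _)
      have h3 := hB (P len)
      linarith
    set x : Fin n → ℝ := fun i => sSup (S i) with hxdef
    have hxb : ∀ i, b i ≤ x i :=
      fun i => le_csSup (hbdd i) ⟨0, Nat.zero_le _, fun _ => i, rfl, by simp [wgt]⟩
    have hxA : ∀ i j, A i j + x j ≤ x i := by
      intro i j
      have hstep : sSup (S j) ≤ x i - A i j := by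
        refine csSup_le (hne j) ?_
        rintro w ⟨len, hlen, P, hP0, rfl⟩
        set P1 : ℕ → Fin n := fun t => if t = 0 then i else P (t - 1) with hP1
        have hw1 : wgt A (len + 1) P1 = A i j + wgt A len P := by
          unfold wgt
          rw [Finset.sum_range_succ']
          have hterm : ∀ t, A (P1 (t + 1)) (P1 (t + 1 + 1)) = A (P t) (P (t + 1)) := by
            intro t
            simp only [hP1, if_neg (Nat.succ_ne_zero t), if_neg (Nat.succ_ne_zero (t + 1)),
              Nat.add_sub_cancel]
          rw [Finset.sum_congr rfl fun t _ => hterm t]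
          have h0 : A (P1 0) (P1 (0 + 1)) = A i j := by
            simp only [hP1, if_pos rfl, if_neg (Nat.one_ne_zero), hP0]
          rw [h0]
          ring
        obtain ⟨len', hlen', P', hP'0, hP'e, hle⟩ := reduce_walk hn A hcyc (len + 1) P1
        have hstart : P' 0 = i := by rw [hP'0]; simp [hP1]
        have hend : P' len' = P len := by
          rw [hP'e]; simp only [hP1, if_neg (Nat.succ_ne_zero len), Nat.add_sub_cancel]
        have hmem : wgt A len' P' + b (P' len') ∈ S i := ⟨len', hlen', P', hstart, rfl⟩
        have hle2 : wgt A len' P' + b (P' len') ≤ x i := le_csSup (hbdd i) hmem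
        rw [hend] at hle2
        linarith
      have hxj : x j = sSup (S j) := rfl
      linarith [hstep]
    have hxle : ∀ i, x i ≤ max (mpMulVec A x i) (b i) := by
      intro i
      refine csSup_le (hne i) ?_
      rintro w ⟨len, hlen, P, hP0, rfl⟩
      cases len with
      | zero =>
        have : wgt A 0 P + b (P 0) = b i := by simp [wgt, hP0]
        rw [this]; exact le_max_right _ _
      | succ m =>
        have hw : wgt A (m + 1) P = A i (P 1) + wgt A m (fun t => P (t + 1)) := by
          unfold wgt
          rw [Finset.sum_range_succ']
          dsimp only
          rw [show A (P 0) (P (0 + 1)) = A i (P 1) from by rw [hP0]]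
          ring
        have hmem : wgt A m (fun t => P (t + 1)) + b (P (m + 1)) ∈ S (P 1) :=
          ⟨m, by omega, fun t => P (t + 1), rfl, rfl⟩
        have h1 : wgt A m (fun t => P (t + 1)) + b (P (m + 1)) ≤ x (P 1) :=
          le_csSup (hbdd _) hmem
        have h2 : A i (P 1) + x (P 1) ≤ mpMulVec A x i :=
          le_ciSup (f := fun j => A i j + x j) (Set.Finite.bddAbove (Set.finite_range _)) (P 1)
        calc wgt A (m + 1) P + b (P (m + 1))
            = A i (P 1) + (wgt A m (fun t => P (t + 1)) + b (P (m + 1))) := by rw [hw]; ring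
          _ ≤ A i (P 1) + x (P 1) := by linarith
          _ ≤ mpMulVec A x i := h2
          _ ≤ max (mpMulVec A x i) (b i) := le_max_left _ _
    refine ⟨x, fun i => le_antisymm (hxle i) (max_le ?_ (hxb i))⟩
    exact ciSup_le fun j => hxA i j
end

section
/- Let A ∈ ℝ^{n×n} and b ∈ ℝ^n with ρ(A) ≤ 0. Then a vector x ∈ ℝ^n satisfies x = (A ⊗ x) ⊕ b if and only if there exists v ∈ (ℝ ∪ {−∞})^n with A ⊗ v = v such that x = (A* ⊗ b) ⊕ v (componentwise maximum). -/
open Finset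

namespace MPAux

variable {n : ℕ}

/-- Walk-sum over an interval of ℕ indices. -/
noncomputable def wW (B : Fin n → Fin n → ℝ) (f : ℕ → Fin n) (a b : ℕ) : ℝ :=
  ∑ m ∈ Finset.Ico a b, B (f m) (f (m+1))

variable (A : Fin n → Fin n → ℝ)

lemma bddA {α : Type*} [Finite α] (g : α → ℝ) : BddAbove (Set.range g) := (Set.finite_range g).bddAbove

lemma wW_congr {f g : ℕ → Fin n} {a b : ℕ} (h : ∀ m, a ≤ m → m ≤ b → f m = g m) :
    wW A f a b = wW A g a b := by
  unfold wW
  apply Finset.sum_congr rfl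
  intro m hm
  rw [Finset.mem_Ico] at hm
  rw [h m (by omega) (by omega), h (m+1) (by omega) (by omega)]

lemma wW_split (f : ℕ → Fin n) {a m b : ℕ} (h1 : a ≤ m) (h2 : m ≤ b) :
    wW A f a b = wW A f a m + wW A f m b :=
  (Finset.sum_Ico_consecutive _ h1 h2).symm

lemma wW_succ_bot (f : ℕ → Fin n) {a b : ℕ} (h : a < b) :
    wW A f a b = A (f a) (f (a+1)) + wW A f (a+1) b :=
  Finset.sum_eq_sum_Ico_succ_bot h _

lemma wW_shift (f : ℕ → Fin n) (c a b : ℕ) :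
    wW A (fun u => f (u + c)) a b = wW A f (a+c) (b+c) := by
  unfold wW
  rw [Finset.sum_Ico_eq_sum_range, Finset.sum_Ico_eq_sum_range]
  have hb : b + c - (a + c) = b - a := by omega
  rw [hb]
  apply Finset.sum_congr rfl
  intro m _
  have e1 : a + m + c = a + c + m := by omega
  have e2 : a + m + 1 + c = a + c + m + 1 := by omega
  show A (f (a + m + c)) (f (a + m + 1 + c)) = _
  rw [show a + m + c = a + c + m from by omega, show a + m + 1 + c = a + c + m + 1 from by omega]

lemma wW_prepend (i : Fin n) (f : ℕ → Fin n) (b : ℕ) :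
    wW A (fun u => if u = 0 then i else f (u-1)) 0 (b+1) = A i (f 0) + wW A f 0 b := by
  set g : ℕ → Fin n := fun u => if u = 0 then i else f (u-1) with hg
  rw [wW_succ_bot A g (by omega)]
  have h1 : g 0 = i := rfl
  have h2 : g 1 = f 0 := rfl
  rw [h1, h2]
  congr 1
  have h3 : (fun u => g (u + 1)) = f := by
    funext u
    simp only [hg]
    have : u + 1 ≠ 0 := by omega
    rw [if_neg this, Nat.add_sub_cancel]
  have := wW_shift A g 1 0 b
  rw [h3] at this
  rw [← this]


lemma cycleSet_bdd (hn : 0 < n) :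
    BddAbove { r | ∃ k, 1 ≤ k ∧ k ≤ Fintype.card (Fin n) ∧
      ∃ P : Fin (k + 1) → Fin n, P 0 = P (Fin.last k) ∧ r = (∑ t : Fin k, A (P t.castSucc) (P t.succ)) / (k : ℝ) } := by
  haveI : Nonempty (Fin n) := Fin.pos_iff_nonempty.mp hn
  refine ⟨⨆ p : Fin n × Fin n, A p.1 p.2, ?_⟩
  rintro r ⟨k, hk1, hkn, P, hP, rfl⟩
  have hM : ∀ a c : Fin n, A a c ≤ ⨆ p : Fin n × Fin n, A p.1 p.2 := fun a c =>
    le_ciSup (f := fun p : Fin n × Fin n => A p.1 p.2) (bddA _) ⟨a, c⟩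
  have hsum : (∑ t : Fin k, A (P t.castSucc) (P t.succ)) ≤ (k : ℝ) * (⨆ p : Fin n × Fin n, A p.1 p.2) := by
    calc (∑ t : Fin k, A (P t.castSucc) (P t.succ))
        ≤ ∑ _t : Fin k, (⨆ p : Fin n × Fin n, A p.1 p.2) := Finset.sum_le_sum fun t _ => hM _ _
      _ = (k : ℝ) * (⨆ p : Fin n × Fin n, A p.1 p.2) := by
          rw [Finset.sum_const, Finset.card_univ, Fintype.card_fin, nsmul_eq_mul]
  have hkpos : (0 : ℝ) < (k : ℝ) := by exact_mod_cast hk1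
  rw [div_le_iff₀ hkpos]
  linarith [hsum]

variable (hn : 0 < n) (hrho : maxCycleMean A ≤ 0)

include hn hrho in
lemma cycle_nonpos (f : ℕ → Fin n) (s c : ℕ) (hc1 : 1 ≤ c) (hcn : c ≤ n)
    (hf : f (s + c) = f s) : wW A f s (s + c) ≤ 0 := by
  set P : Fin (c+1) → Fin n := fun u => f (s + (u : ℕ)) with hPdef
  have hw : walkWeight A c P = wW A f s (s + c) := by
    unfold walkWeight wW
    calc ∑ t : Fin c, A (P t.castSucc) (P t.succ)
        = ∑ t : Fin c, A (f (s + (t:ℕ))) (f (s + (t:ℕ) + 1)) := by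
          apply Finset.sum_congr rfl
          intro t _
          have e1 : P t.castSucc = f (s + (t : ℕ)) := by simp [hPdef]
          have e2 : P t.succ = f (s + (t : ℕ) + 1) := by
            simp only [hPdef, Fin.val_succ, ← Nat.add_assoc]
          rw [e1, e2]
      _ = ∑ m ∈ Finset.range c, A (f (s + m)) (f (s + m + 1)) :=
          Fin.sum_univ_eq_sum_range (fun t => A (f (s + t)) (f (s + t + 1))) c
      _ = ∑ m ∈ Finset.Ico s (s + c), A (f m) (f (m + 1)) := by
          rw [Finset.sum_Ico_eq_sum_range]
          have : s + c - s = c := by omega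
          rw [this]
  have hmem : walkWeight A c P / (c : ℝ) ∈ { r | ∃ k, 1 ≤ k ∧ k ≤ Fintype.card (Fin n) ∧
      ∃ P : Fin (k + 1) → Fin n, P 0 = P (Fin.last k) ∧ r = walkWeight A k P / (k : ℝ) } := by
    refine ⟨c, hc1, by simpa using hcn, P, ?_, rfl⟩
    simp only [hPdef]
    simp [Fin.last]
    rw [hf]
  have hle : walkWeight A c P / (c : ℝ) ≤ maxCycleMean A := by
    apply le_csSup _ hmem
    · unfold walkWeight
      exact cycleSet_bdd A hn
  have hcpos : (0:ℝ) < (c:ℝ) := by exact_mod_cast hc1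
  have := hle.trans hrho
  rw [div_le_iff₀ hcpos] at this
  rw [← hw]
  linarith

lemma pow_ge : ∀ (m : ℕ) (f : ℕ → Fin n) (s : ℕ),
    wW A f s (s + (m+1)) ≤ mpPow1 A m (f s) (f (s + (m+1))) := by
  intro m
  induction m with
  | zero =>
    intro f s
    rw [wW_succ_bot A f (by omega : s < s + 1)]
    have : wW A f (s+1) (s+1) = 0 := by simp [wW]
    rw [this]
    simp [mpPow1]
  | succ m IH =>
    intro f s
    haveI : Nonempty (Fin n) := ⟨f 0⟩
    rw [wW_succ_bot A f (by omega : s < s + (m+2))]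
    have e : s + (m + 2) = (s+1) + (m+1) := by omega
    rw [e]
    have h1 := IH f (s+1)
    show A (f s) (f (s+1)) + wW A f (s+1) (s+1+(m+1)) ≤ mpPow1 A (m+1) (f s) (f (s+1+(m+1)))
    have h2 : A (f s) (f (s+1)) + wW A f (s+1) (s+1+(m+1)) ≤
        A (f s) (f (s+1)) + mpPow1 A m (f (s+1)) (f (s+1+(m+1))) := by linarith
    refine h2.trans ?_
    show _ ≤ mpMul A (mpPow1 A m) (f s) (f (s+1+(m+1)))
    unfold mpMul
    exact le_ciSup (f := fun j => A (f s) j + mpPow1 A m j (f (s+1+(m+1)))) (bddA _) (f (s+1))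

include hn in
lemma pow_attained : ∀ (m : ℕ) (i j : Fin n), ∃ f : ℕ → Fin n,
    f 0 = i ∧ f (m+1) = j ∧ mpPow1 A m i j ≤ wW A f 0 (m+1) := by
  haveI : Nonempty (Fin n) := Fin.pos_iff_nonempty.mp hn
  intro m
  induction m with
  | zero =>
    intro i j
    refine ⟨fun u => if u = 0 then i else j, rfl, rfl, ?_⟩
    have : wW A (fun u => if u = 0 then i else j) 0 1 = A i j := by
      simp [wW, Finset.sum_Ico_eq_sum_range]
    rw [this]
    exact le_refl _
  | succ m IH =>
    intro i j
    obtain ⟨t₀, ht₀⟩ := Finite.exists_max (fun t => A i t + mpPow1 A m t j)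
    obtain ⟨f, hf0, hf1, hfw⟩ := IH t₀ j
    refine ⟨fun u => if u = 0 then i else f (u-1), rfl, ?_, ?_⟩
    · show f (m + 2 - 1) = j
      simpa using hf1
    · rw [wW_prepend A i f (m+1), hf0]
      have h1 : mpPow1 A (m+1) i j ≤ A i t₀ + mpPow1 A m t₀ j := by
        show mpMul A (mpPow1 A m) i j ≤ _
        exact ciSup_le ht₀
      linarith


include hn hrho in
lemma walk_bound : ∀ len, ∀ f : ℕ → Fin n, wW A f 0 len ≤ kleeneStar A (f 0) (f len) := by
  intro len
  induction len using Nat.strong_induction_on with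
  | _ len IH =>
  intro f
  rcases Nat.eq_zero_or_pos len with h0 | hpos
  · subst h0
    have : wW A f 0 0 = 0 := by simp [wW]
    rw [this]
    unfold kleeneStar
    rw [if_pos rfl]
    exact le_max_left _ _
  rcases le_or_gt len (n - 1) with hsmall | hbig
  · -- 1 ≤ len ≤ n-1
    have hlen : len - 1 + 1 = len := by omega
    have h1 : wW A f 0 len ≤ mpPow1 A (len - 1) (f 0) (f len) := by
      have := pow_ge A (len - 1) f 0
      rw [Nat.zero_add, hlen] at this
      exact this
    refine h1.trans ?_
    have hm : len - 1 < Fintype.card (Fin n) - 1 := by simp; omega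
    have h2 : mpPow1 A (len - 1) (f 0) (f len) ≤
        ⨆ m : Fin (Fintype.card (Fin n) - 1), mpPow1 A (m : ℕ) (f 0) (f len) :=
      le_ciSup (f := fun m : Fin (Fintype.card (Fin n) - 1) => mpPow1 A (m : ℕ) (f 0) (f len))
        (bddA _) ⟨len - 1, hm⟩
    unfold kleeneStar
    split_ifs with h
    · rw [h] at h2 ⊢
      exact h2.trans (le_max_right _ _)
    · exact h2
  · -- len ≥ n
    have hlenn : n ≤ len := by omega
    obtain ⟨a, b, hab, heq⟩ := Fintype.exists_ne_map_eq_of_card_lt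
      (fun u : Fin (n+1) => f (u : ℕ)) (by simp)
    set s : ℕ := min (a : ℕ) (b : ℕ) with hs
    set t : ℕ := max (a : ℕ) (b : ℕ) with ht
    have hvalne : (a : ℕ) ≠ (b : ℕ) := fun h => hab (Fin.ext h)
    have hst : s < t := by omega
    have htn : t ≤ n := by
      have := a.isLt
      have := b.isLt
      omega
    have hfst : f s = f t := by
      rcases le_or_gt (a : ℕ) (b : ℕ) with h | h
      · have : s = (a : ℕ) ∧ t = (b : ℕ) := by omega
        rw [this.1, this.2]; exact heq
      · have : s = (b : ℕ) ∧ t = (a : ℕ) := by omega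
        rw [this.1, this.2]; exact heq.symm
    set c : ℕ := t - s with hc
    have hc1 : 1 ≤ c := by omega
    have hcn : c ≤ n := by omega
    have hsc : s + c = t := by omega
    have hcle : c ≤ len := by omega
    set len' : ℕ := len - c with hlen'
    have hslen' : s ≤ len' := by omega
    set g : ℕ → Fin n := fun u => if u ≤ s then f u else f (u + c) with hg
    have hg0 : g 0 = f 0 := by simp [hg]
    have hglen : g len' = f len := by
      by_cases hls : len' ≤ s
      · have h1 : len' = s := by omega
        have h2 : len = t := by omega
        show (if len' ≤ s then f len' else f (len' + c)) = f len
        rw [if_pos hls, h1, h2, hfst]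
      · simp only [hg, if_neg hls]
        congr 1
        omega
    have e2 : wW A g 0 len' = wW A f 0 s + wW A f t len := by
      rw [wW_split A g (Nat.zero_le s) hslen']
      congr 1
      · apply wW_congr
        intro m _ hm
        simp [hg, hm]
      · have h3 : wW A g s len' = wW A (fun u => f (u + c)) s len' := by
          apply wW_congr
          intro m hm1 _
          rcases Nat.eq_or_lt_of_le hm1 with h | h
          · simp only [hg, ← h, le_refl, if_pos]
            rw [← h] at *
            rw [hfst, ← hsc]
          · simp only [hg]
            rw [if_neg (by omega)]
        rw [h3, wW_shift, hsc]
        congr 1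
        omega
    have hsplitf : wW A f 0 len = wW A f 0 s + wW A f s t + wW A f t len := by
      rw [wW_split A f (Nat.zero_le s) (by omega : s ≤ len),
          wW_split A f (by omega : s ≤ t) (by omega : t ≤ len)]
      ring
    have hcyc : wW A f s t ≤ 0 := by
      have := cycle_nonpos A hn hrho f s c hc1 hcn (by rw [hsc, hfst])
      rwa [hsc] at this
    have hrec : wW A g 0 len' ≤ kleeneStar A (f 0) (f len) := by
      have := IH len' (by omega) g
      rwa [hg0, hglen] at this
    rw [hsplitf]
    rw [e2] at hrec
    linarith

include hn hrho in
lemma pow_le_star (m : ℕ) (i j : Fin n) : mpPow1 A m i j ≤ kleeneStar A i j := by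
  obtain ⟨f, hf0, hf1, hfw⟩ := pow_attained A hn m i j
  have := walk_bound A hn hrho (m+1) f
  rw [hf0, hf1] at this
  exact hfw.trans this

include hn hrho in
lemma prepend_star (m : ℕ) (i j k : Fin n) :
    A i j + mpPow1 A m j k ≤ kleeneStar A i k := by
  obtain ⟨f, hf0, hf1, hfw⟩ := pow_attained A hn m j k
  set g : ℕ → Fin n := fun u => if u = 0 then i else f (u-1) with hgdef
  have hw := walk_bound A hn hrho (m+2) g
  have hg0 : g 0 = i := rfl
  have hgm : g (m+2) = f (m+1) := by
    simp only [hgdef]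
    rw [if_neg (by omega)]
    norm_num
  have hpre : wW A g 0 (m+2) = A i (f 0) + wW A f 0 (m+1) := wW_prepend A i f (m+1)
  rw [hpre, hg0, hgm, hf0, hf1] at hw
  linarith

lemma star_diag (i : Fin n) : 0 ≤ kleeneStar A i i := by
  unfold kleeneStar
  rw [if_pos rfl]
  exact le_max_left _ _

include hn hrho in
lemma star_mul (i j k : Fin n) : A i j + kleeneStar A j k ≤ kleeneStar A i k := by
  rw [← le_sub_iff_add_le']
  unfold kleeneStar
  by_cases hjk : j = k
  · subst hjk
    rw [if_pos rfl]
    apply max_le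
    · rw [le_sub_iff_add_le', add_zero]
      exact pow_le_star A hn hrho 0 i j
    · by_cases hne : Nonempty (Fin (Fintype.card (Fin n) - 1))
      · apply ciSup_le
        intro m
        rw [le_sub_iff_add_le']
        exact prepend_star A hn hrho (m : ℕ) i j j
      · rw [not_nonempty_iff] at hne
        rw [Real.iSup_of_isEmpty]
        rw [le_sub_iff_add_le', add_zero]
        exact pow_le_star A hn hrho 0 i j
  · rw [if_neg hjk]
    by_cases hne : Nonempty (Fin (Fintype.card (Fin n) - 1))
    · apply ciSup_le
      intro m
      rw [le_sub_iff_add_le']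
      exact prepend_star A hn hrho (m : ℕ) i j k
    · exfalso
      rw [not_nonempty_iff] at hne
      have h1 : Fintype.card (Fin n) - 1 = 0 := by
        by_contra h
        exact hne.elim' ⟨0, by omega⟩
      simp at h1
      have : n = 1 := by omega
      subst this
      exact hjk (Subsingleton.elim j k)


section Bellman

variable (b : Fin n → ℝ)

lemma b_le_xstar (i : Fin n) : b i ≤ mpMulVec (kleeneStar A) b i := by
  have h1 : b i ≤ kleeneStar A i i + b i := by
    have := star_diag A i
    linarith
  exact h1.trans (le_ciSup (f := fun j => kleeneStar A i j + b j) (bddA _) i)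

include hn hrho in
lemma Axstar_le (i : Fin n) :
    mpMulVec A (mpMulVec (kleeneStar A) b) i ≤ mpMulVec (kleeneStar A) b i := by
  haveI : Nonempty (Fin n) := Fin.pos_iff_nonempty.mp hn
  apply ciSup_le
  intro j
  show A i j + mpMulVec (kleeneStar A) b j ≤ _
  rw [← le_sub_iff_add_le']
  apply ciSup_le
  intro k
  rw [le_sub_iff_add_le', ← add_assoc]
  calc A i j + kleeneStar A j k + b k ≤ kleeneStar A i k + b k := by
        have := star_mul A hn hrho i j k
        linarith
    _ ≤ mpMulVec (kleeneStar A) b i :=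
        le_ciSup (f := fun k => kleeneStar A i k + b k) (bddA _) k

include hn hrho in
lemma pow_b_le : ∀ (m : ℕ) (i j : Fin n),
    mpPow1 A m i j + b j ≤ mpMulVec A (mpMulVec (kleeneStar A) b) i := by
  haveI : Nonempty (Fin n) := Fin.pos_iff_nonempty.mp hn
  intro m
  induction m with
  | zero =>
    intro i j
    show A i j + b j ≤ _
    calc A i j + b j ≤ A i j + mpMulVec (kleeneStar A) b j := by
          have := b_le_xstar A b j
          linarith
      _ ≤ _ := le_ciSup (f := fun j => A i j + mpMulVec (kleeneStar A) b j) (bddA _) j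
  | succ m IH =>
    intro i j
    show mpMul A (mpPow1 A m) i j + b j ≤ _
    rw [← le_sub_iff_add_le]
    apply ciSup_le
    intro t
    rw [le_sub_iff_add_le, add_assoc]
    calc A i t + (mpPow1 A m t j + b j)
        ≤ A i t + (kleeneStar A t j + b j) := by
          have := pow_le_star A hn hrho m t j
          linarith
      _ ≤ A i t + mpMulVec (kleeneStar A) b t := by
          have : kleeneStar A t j + b j ≤ mpMulVec (kleeneStar A) b t :=
            le_ciSup (f := fun k => kleeneStar A t k + b k) (bddA _) j
          linarith
      _ ≤ _ := le_ciSup (f := fun t => A i t + mpMulVec (kleeneStar A) b t) (bddA _) t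

include hn hrho in
lemma star_le_generic (x : Fin n → ℝ)
    (hpow : ∀ (m : ℕ) (i j : Fin n), mpPow1 A m i j + b j ≤ x i)
    (hb : ∀ i, b i ≤ x i) (i : Fin n) :
    mpMulVec (kleeneStar A) b i ≤ x i := by
  haveI : Nonempty (Fin n) := Fin.pos_iff_nonempty.mp hn
  apply ciSup_le
  intro j
  unfold kleeneStar
  by_cases hij : i = j
  · subst hij
    rw [if_pos rfl]
    rw [← max_add_add_right]
    apply max_le
    · rw [zero_add]
      exact hb i
    · by_cases hne : Nonempty (Fin (Fintype.card (Fin n) - 1))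
      · rw [← le_sub_iff_add_le]
        apply ciSup_le
        intro m
        rw [le_sub_iff_add_le]
        exact hpow (m : ℕ) i i
      · rw [not_nonempty_iff] at hne
        rw [Real.iSup_of_isEmpty, zero_add]
        exact hb i
  · rw [if_neg hij]
    by_cases hne : Nonempty (Fin (Fintype.card (Fin n) - 1))
    · rw [← le_sub_iff_add_le]
      apply ciSup_le
      intro m
      rw [le_sub_iff_add_le]
      exact hpow (m : ℕ) i j
    · exfalso
      rw [not_nonempty_iff] at hne
      have h1 : Fintype.card (Fin n) - 1 = 0 := by
        by_contra h
        exact hne.elim' ⟨0, by omega⟩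
      simp at h1
      have : n = 1 := by omega
      subst this
      exact hij (Subsingleton.elim i j)

include hn hrho in
lemma bellman (i : Fin n) :
    mpMulVec (kleeneStar A) b i = max (mpMulVec A (mpMulVec (kleeneStar A) b) i) (b i) := by
  apply le_antisymm
  · apply star_le_generic A hn hrho b _ _ _ i
    · intro m i' j
      exact (pow_b_le A hn hrho b m i' j).trans (le_max_left _ _)
    · intro i'
      exact le_max_right _ _
  · exact max_le (Axstar_le A hn hrho b i) (b_le_xstar A b i)

include hn hrho in
lemma xstar_le_x (x : Fin n → ℝ) (hAx : ∀ i, mpMulVec A x i ≤ x i)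
    (hbx : ∀ i, b i ≤ x i) (i : Fin n) : mpMulVec (kleeneStar A) b i ≤ x i := by
  haveI : Nonempty (Fin n) := Fin.pos_iff_nonempty.mp hn
  have hpowx : ∀ (m : ℕ) (i j : Fin n), mpPow1 A m i j + x j ≤ x i := by
    intro m
    induction m with
    | zero =>
      intro i j
      exact (le_ciSup (f := fun j => A i j + x j) (bddA _) j).trans (hAx i)
    | succ m IH =>
      intro i j
      show mpMul A (mpPow1 A m) i j + x j ≤ x i
      rw [← le_sub_iff_add_le]
      apply ciSup_le
      intro t
      rw [le_sub_iff_add_le, add_assoc]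
      calc A i t + (mpPow1 A m t j + x j) ≤ A i t + x t := by
            have := IH t j
            linarith
        _ ≤ x i := (le_ciSup (f := fun t => A i t + x t) (bddA _) t).trans (hAx i)
  apply star_le_generic A hn hrho b x _ hbx i
  intro m i' j
  calc mpPow1 A m i' j + b j ≤ mpPow1 A m i' j + x j := by
        have := hbx j
        linarith
    _ ≤ x i' := hpowx m i' j

end Bellman


section ERealHelpers

lemma ereal_coe_max (p q : ℝ) : ((max p q : ℝ) : EReal) = max (p : EReal) (q : EReal) := by
  rcases le_total p q with h | h
  · rw [max_eq_right h, max_eq_right (EReal.coe_le_coe_iff.2 h)]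
  · rw [max_eq_left h, max_eq_left (EReal.coe_le_coe_iff.2 h)]

lemma ereal_add_max (a x y : EReal) : a + max x y = max (a + x) (a + y) := by
  rcases le_total x y with h | h
  · rw [max_eq_right h, max_eq_right (add_le_add le_rfl h)]
  · rw [max_eq_left h, max_eq_left (add_le_add le_rfl h)]

lemma ereal_cancel (a : ℝ) (x : EReal) : ((-a : ℝ) : EReal) + ((a : EReal) + x) = x := by
  induction x using EReal.rec with
  | bot => rw [EReal.add_bot, EReal.add_bot]
  | coe y =>
    rw [← EReal.coe_add, ← EReal.coe_add]
    norm_num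
  | top =>
    rw [EReal.add_top_of_ne_bot (EReal.coe_ne_bot a),
        EReal.add_top_of_ne_bot (EReal.coe_ne_bot _)]

lemma ereal_add_iInf (a : ℝ) (g : ℕ → EReal) :
    (a : EReal) + ⨅ k, g k = ⨅ k, ((a : EReal) + g k) := by
  apply le_antisymm
  · exact le_iInf fun k => add_le_add le_rfl (iInf_le _ k)
  · have h2 : ⨅ k, (((-a : ℝ) : EReal) + ((a : EReal) + g k)) = ⨅ k, g k := by
      simp only [ereal_cancel]
    calc ⨅ k, ((a : EReal) + g k)
        = (a : EReal) + (((-a : ℝ) : EReal) + ⨅ k, ((a : EReal) + g k)) := by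
          have := ereal_cancel (-a) (⨅ k, ((a : EReal) + g k))
          rw [neg_neg] at this
          rw [this]
      _ ≤ (a : EReal) + ⨅ k, g k := by
          apply add_le_add le_rfl
          rw [← h2]
          exact le_iInf fun k => add_le_add le_rfl (iInf_le _ k)

lemma ereal_coe_iSup_fin {n : ℕ} (hn : 0 < n) (g : Fin n → ℝ) :
    ((⨆ j, g j : ℝ) : EReal) = ⨆ j, ((g j : ℝ) : EReal) := by
  haveI : Nonempty (Fin n) := Fin.pos_iff_nonempty.mp hn
  obtain ⟨j₀, hj₀⟩ := Finite.exists_max g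
  apply le_antisymm
  · exact (EReal.coe_le_coe_iff.2 (ciSup_le hj₀)).trans
      (le_iSup (fun j => ((g j : ℝ) : EReal)) j₀)
  · exact iSup_le fun j => EReal.coe_le_coe_iff.2 (le_ciSup (bddA g) j)

lemma mpMulVecE_coe {n : ℕ} (hn : 0 < n) (A : Fin n → Fin n → ℝ) (u : Fin n → ℝ) (i : Fin n) :
    mpMulVecE A (fun j => ((u j : ℝ) : EReal)) i = ((mpMulVec A u i : ℝ) : EReal) := by
  unfold mpMulVecE mpMulVec
  rw [ereal_coe_iSup_fin hn]
  apply iSup_congr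
  intro j
  exact (EReal.coe_add _ _).symm

end ERealHelpers

end MPAux

open MPAux

/-- when `ρ(A) ≤ 0`, the solutions of `x = (A ⊗ x) ⊕ b` are exactly the vectors
`x = (A* ⊗ b) ⊕ v` where `v ∈ (ℝ ∪ {-∞})^n` satisfies `A ⊗ v = v`. -/
theorem stmt2 {n : ℕ} (hn : 0 < n) (A : Fin n → Fin n → ℝ) (b : Fin n → ℝ)
    (hrho : maxCycleMean A ≤ 0) (x : Fin n → ℝ) :
    (∀ i, x i = max (mpMulVec A x i) (b i)) ↔
      ∃ v : Fin n → EReal, (∀ i, mpMulVecE A v i = v i) ∧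
        ∀ i, (x i : EReal) = max ((mpMulVec (kleeneStar A) b i : ℝ) : EReal) (v i) := by
  haveI : Nonempty (Fin n) := Fin.pos_iff_nonempty.mp hn
  set xs : Fin n → ℝ := mpMulVec (kleeneStar A) b with hxs
  constructor
  · intro hx
    have hAx : ∀ i, mpMulVec A x i ≤ x i :=
      fun i => le_of_le_of_eq (le_max_left _ _) (hx i).symm
    have hbx : ∀ i, b i ≤ x i :=
      fun i => le_of_le_of_eq (le_max_right _ _) (hx i).symm
    set y : ℕ → Fin n → ℝ := fun k => (fun z => mpMulVec A z)^[k] x with hy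
    have hy0 : y 0 = x := rfl
    have hysucc : ∀ k, y (k+1) = mpMulVec A (y k) := fun k =>
      Function.iterate_succ_apply' _ _ _
    have hmono : ∀ u w : Fin n → ℝ, (∀ j, u j ≤ w j) →
        ∀ i, mpMulVec A u i ≤ mpMulVec A w i := by
      intro u w h i
      apply ciSup_le
      intro j
      exact (add_le_add le_rfl (h j)).trans
        (le_ciSup (f := fun j => A i j + w j) (bddA _) j)
    have hanti : ∀ k i, y (k+1) i ≤ y k i := by
      intro k
      induction k with
      | zero =>
        intro i
        rw [hysucc 0, hy0]
        exact hAx i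
      | succ k IH =>
        intro i
        rw [hysucc (k+1)]
        exact (hmono _ _ IH i).trans (le_of_eq (congrFun (hysucc k) i).symm)
    have hAnti : Antitone y := antitone_nat_of_succ_le (fun k i => hanti k i)
    have hxsx : ∀ i, xs i ≤ x i := xstar_le_x A hn hrho b x hAx hbx
    set v : Fin n → EReal := fun i => ⨅ k, ((y k i : ℝ) : EReal) with hv
    have hvle : ∀ i, v i ≤ ((x i : ℝ) : EReal) := fun i => iInf_le _ 0
    refine ⟨v, ?_, ?_⟩
    · intro i
      apply le_antisymm
      · apply iSup_le
        intro j
        apply le_iInf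
        intro k
        calc ((A i j : ℝ) : EReal) + v j
            ≤ ((A i j : ℝ) : EReal) + ((y k j : ℝ) : EReal) :=
              add_le_add le_rfl (iInf_le _ k)
          _ = ((A i j + y k j : ℝ) : EReal) := (EReal.coe_add _ _).symm
          _ ≤ ((y (k+1) i : ℝ) : EReal) := by
              apply EReal.coe_le_coe_iff.2
              rw [hysucc k]
              exact le_ciSup (f := fun j => A i j + y k j) (bddA _) j
          _ ≤ ((y k i : ℝ) : EReal) := EReal.coe_le_coe_iff.2 (hanti k i)
      · have hch : ∀ k, ∃ j, y (k+1) i ≤ A i j + y k j := by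
          intro k
          obtain ⟨j₀, hj₀⟩ := Finite.exists_max (fun j => A i j + y k j)
          refine ⟨j₀, ?_⟩
          rw [hysucc k]
          exact ciSup_le hj₀
        choose F hF using hch
        obtain ⟨j₀, hfib⟩ := Finite.exists_infinite_fiber F
        have hinf : (F ⁻¹' {j₀} : Set ℕ).Infinite := Set.infinite_coe_iff.mp hfib
        have key : v i ≤ ((A i j₀ : ℝ) : EReal) + v j₀ := by
          have hrw : ((A i j₀ : ℝ) : EReal) + v j₀ =
              ⨅ k, (((A i j₀ : ℝ) : EReal) + ((y k j₀ : ℝ) : EReal)) := by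
            simp only [hv]
            exact ereal_add_iInf _ _
          rw [hrw]
          apply le_iInf
          intro k
          obtain ⟨k', hk'mem, hk'gt⟩ := hinf.exists_gt k
          have h1 : v i ≤ ((y (k'+1) i : ℝ) : EReal) := iInf_le _ (k'+1)
          have h2 : y (k'+1) i ≤ A i j₀ + y k' j₀ := by
            have h := hF k'
            have hFk : F k' = j₀ := hk'mem
            rwa [hFk] at h
          have h3 : y k' j₀ ≤ y k j₀ := hAnti (le_of_lt hk'gt) j₀
          calc v i ≤ ((y (k'+1) i : ℝ) : EReal) := h1
            _ ≤ ((A i j₀ + y k j₀ : ℝ) : EReal) := EReal.coe_le_coe_iff.2 (by linarith)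
            _ = ((A i j₀ : ℝ) : EReal) + ((y k j₀ : ℝ) : EReal) := EReal.coe_add _ _
        exact key.trans (le_iSup (fun j => ((A i j : ℝ) : EReal) + v j) j₀)
    · have hxmax : ∀ k i, x i ≤ max (y k i) (xs i) := by
        intro k
        induction k with
        | zero =>
          intro i
          exact le_max_left _ _
        | succ k IH =>
          intro i
          rw [hx i]
          apply max_le
          · have h1 : ∀ j, A i j + x j ≤ max (y (k+1) i) (xs i) := by
              intro j
              rcases le_max_iff.mp (IH j) with h | h
              · have : A i j + x j ≤ A i j + y k j := by linarith
                refine this.trans (le_trans ?_ (le_max_left _ _))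
                rw [hysucc k]
                exact le_ciSup (f := fun j => A i j + y k j) (bddA _) j
              · have : A i j + x j ≤ A i j + xs j := by linarith
                refine this.trans (le_trans ?_ (le_max_right _ _))
                exact (le_ciSup (f := fun j => A i j + xs j) (bddA _) j).trans
                  (Axstar_le A hn hrho b i)
            exact ciSup_le h1
          · exact (b_le_xstar A b i).trans (le_max_right _ _)
      intro i
      apply le_antisymm
      · rcases eq_or_lt_of_le (hvle i) with heq | hlt
        · exact (le_of_eq heq.symm).trans (le_max_right _ _)
        · obtain ⟨k, hk⟩ := iInf_lt_iff.mp hlt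
          have hk' : y k i < x i := EReal.coe_lt_coe_iff.mp hk
          have hxxs : x i ≤ xs i := by
            rcases le_max_iff.mp (hxmax k i) with h | h
            · linarith
            · exact h
          exact (EReal.coe_le_coe_iff.2 hxxs).trans (le_max_left _ _)
      · exact max_le (EReal.coe_le_coe_iff.2 (hxsx i)) (hvle i)
  · rintro ⟨v, hvfix, hxv⟩ i
    have key : ((x i : ℝ) : EReal) = ((max (mpMulVec A x i) (b i) : ℝ) : EReal) := by
      rw [ereal_coe_max]
      have hcoe : ((mpMulVec A x i : ℝ) : EReal) =
          max ((mpMulVec A xs i : ℝ) : EReal) (v i) := by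
        rw [← mpMulVecE_coe hn A x i]
        unfold mpMulVecE
        calc (⨆ j, (((A i j : ℝ) : EReal) + ((x j : ℝ) : EReal)))
            = ⨆ j, max (((A i j : ℝ) : EReal) + ((xs j : ℝ) : EReal))
                (((A i j : ℝ) : EReal) + v j) := by
              apply iSup_congr
              intro j
              rw [hxv j, ereal_add_max]
          _ = max (⨆ j, (((A i j : ℝ) : EReal) + ((xs j : ℝ) : EReal)))
                (⨆ j, (((A i j : ℝ) : EReal) + v j)) := by
              exact iSup_sup_eq
          _ = max ((mpMulVec A xs i : ℝ) : EReal) (mpMulVecE A v i) := by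
              rw [← mpMulVecE_coe hn A xs i]
              rfl
          _ = max ((mpMulVec A xs i : ℝ) : EReal) (v i) := by rw [hvfix i]
      rw [hcoe]
      rw [max_assoc, max_comm (v i) ((b i : ℝ) : EReal), ← max_assoc]
      rw [← ereal_coe_max]
      rw [← bellman A hn hrho b i]
      exact hxv i
    exact EReal.coe_eq_coe_iff.mp key
end

section
/- Let A ∈ ℝ^{n×n} and b ∈ ℝ^n with ρ(A) < 0. Then x = A* ⊗ b is the unique vector in ℝ^n satisfying x = (A ⊗ x) ⊕ b. -/
open Finset

section Aux

variable {n : ℕ}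

private lemma rbdd {α : Type*} [Finite α] (f : α → ℝ) : BddAbove (Set.range f) :=
  (Set.finite_range f).bddAbove

private lemma walkWeight_zero (B : Fin n → Fin n → ℝ) (P : Fin 1 → Fin n) :
    walkWeight B 0 P = 0 := by simp [walkWeight]

private lemma walkWeight_one (B : Fin n → Fin n → ℝ) (P : Fin 2 → Fin n) :
    walkWeight B 1 P = B (P 0) (P 1) := by
  simp [walkWeight, Fin.sum_univ_one]

private lemma walkWeight_head (B : Fin n → Fin n → ℝ) (k : ℕ) (P : Fin (k+2) → Fin n) :
    walkWeight B (k+1) P = B (P 0) (P 1) + walkWeight B k (fun t => P t.succ) := by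
  unfold walkWeight
  rw [Fin.sum_univ_succ]
  congr 1

private lemma walkWeight_cons (B : Fin n → Fin n → ℝ) (k : ℕ) (i : Fin n)
    (Q : Fin (k+1) → Fin n) :
    walkWeight B (k+1) (Fin.cases i Q) = B i (Q 0) + walkWeight B k Q := by
  rw [walkWeight_head]
  congr 1

private lemma walkWeight_eq_range (B : Fin n → Fin n → ℝ) (k : ℕ) (P : Fin (k+1) → Fin n)
    (f : ℕ → Fin n) (hf : ∀ u : Fin (k+1), f u.val = P u) :
    walkWeight B k P = ∑ u ∈ Finset.range k, B (f u) (f (u+1)) := by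
  unfold walkWeight
  rw [← Fin.sum_univ_eq_sum_range (fun u => B (f u) (f (u+1))) k]
  apply Finset.sum_congr rfl
  intro t _
  have h1 : f t.val = P t.castSucc := by simpa using hf t.castSucc
  have h2 : f (t.val + 1) = P t.succ := by simpa using hf t.succ
  rw [← h1, ← h2]

/-- best walk weight over walks of length `k` from `i` to `j` -/
noncomputable def bW (A : Fin n → Fin n → ℝ) (k : ℕ) (i j : Fin n) : ℝ :=
  ⨆ P : {P : Fin (k+1) → Fin n // P 0 = i ∧ P (Fin.last k) = j}, walkWeight A k P.1

private lemma wkNE (k : ℕ) (hk : 0 < k) (i j : Fin n) :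
    Nonempty {P : Fin (k+1) → Fin n // P 0 = i ∧ P (Fin.last k) = j} := by
  refine ⟨⟨fun t => if t.val = 0 then i else j, ?_, ?_⟩⟩
  · simp
  · simp [Fin.last]
    omega

private lemma le_bW (A : Fin n → Fin n → ℝ) (k : ℕ) (i j : Fin n)
    (P : Fin (k+1) → Fin n) (h0 : P 0 = i) (hl : P (Fin.last k) = j) :
    walkWeight A k P ≤ bW A k i j := by
  have h := le_ciSup
    (f := fun P : {P : Fin (k+1) → Fin n // P 0 = i ∧ P (Fin.last k) = j} =>
      walkWeight A k P.1) (rbdd _) ⟨P, h0, hl⟩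
  exact h

private lemma mpPow1_eq_bW (A : Fin n → Fin n → ℝ) :
    ∀ (s : ℕ) (i j : Fin n), mpPow1 A s i j = bW A (s+1) i j := by
  intro s
  induction s with
  | zero =>
    intro i j
    apply le_antisymm
    · haveI := wkNE 1 one_pos i j
      have h := le_bW A 1 i j (fun t : Fin 2 => if t.val = 0 then i else j) (by simp)
        (by simp [Fin.last])
      rw [walkWeight_one] at h
      show A i j ≤ bW A 1 i j
      simpa using h
    · haveI := wkNE 1 one_pos i j
      apply ciSup_le
      rintro ⟨P, h0, hl⟩
      show walkWeight A 1 P ≤ A i j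
      rw [walkWeight_one, h0, show P 1 = j from hl]
  | succ s IH =>
    intro i j
    haveI : Nonempty (Fin n) := ⟨i⟩
    have hunf : mpPow1 A (s+1) i j = ⨆ l, (A i l + mpPow1 A s l j) := rfl
    rw [hunf]
    apply le_antisymm
    · apply ciSup_le
      intro l
      rw [IH l j]
      have : bW A (s+1) l j ≤ bW A (s+2) i j - A i l := by
        haveI := wkNE (s+1) (Nat.succ_pos s) l j
        apply ciSup_le
        rintro ⟨Q, h0, hl⟩
        show walkWeight A (s+1) Q ≤ _
        have hcons := walkWeight_cons A (s+1) i Q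
        have hle : walkWeight A (s+2) (Fin.cases i Q) ≤ bW A (s+2) i j := by
          apply le_bW A (s+2) i j
          · simp
          · rw [show Fin.last (s+2) = (Fin.last (s+1)).succ from rfl]
            rw [Fin.cases_succ]
            exact hl
        rw [hcons, h0] at hle
        linarith
      linarith [this]
    · haveI := wkNE (s+2) (Nat.succ_pos _) i j
      apply ciSup_le
      rintro ⟨P, h0, hl⟩
      show walkWeight A (s+2) P ≤ _
      have hhead := walkWeight_head A (s+1) P
      have htail : walkWeight A (s+1) (fun t => P t.succ) ≤ bW A (s+1) (P 1) j := by
        apply le_bW A (s+1) (P 1) j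
        · rfl
        · rw [show (Fin.last (s+1)).succ = Fin.last (s+2) from rfl]
          exact hl
      have h2 : A i (P 1) + bW A (s+1) (P 1) j ≤ ⨆ l, (A i l + bW A (s+1) l j) :=
        le_ciSup (rbdd (fun l => A i l + bW A (s+1) l j)) (P 1)
      have h3 : (⨆ l, (A i l + bW A (s+1) l j)) = ⨆ l, (A i l + mpPow1 A s l j) := by
        congr 1
        ext l
        rw [IH l j]
      rw [hhead, h0]
      rw [← h3]
      linarith

end Aux
section Aux2

variable {n : ℕ}

private lemma splice_sum (B : Fin n → Fin n → ℝ) (f : ℕ → Fin n) (s t k : ℕ)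
    (hst : s < t) (htk : t ≤ k) (hf : f s = f t) :
    ∑ u ∈ Finset.range k, B (f u) (f (u+1))
      = (∑ u ∈ Finset.range (k - (t-s)),
          B (if u ≤ s then f u else f (u + (t-s)))
            (if u+1 ≤ s then f (u+1) else f (u+1+(t-s))))
        + ∑ u ∈ Finset.range (t-s), B (f (s+u)) (f (s+u+1)) := by
  set d := t - s with hd
  set g : ℕ → ℝ := fun u => B (f u) (f (u+1)) with hg
  have hsk : s ≤ k - d := by omega
  have e1 : ∑ u ∈ Finset.range k, g u
      = (∑ u ∈ Finset.Ico 0 s, g u + ∑ u ∈ Finset.Ico s t, g u) + ∑ u ∈ Finset.Ico t k, g u := by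
    rw [Finset.sum_Ico_consecutive g (Nat.zero_le s) (le_of_lt hst),
      Finset.sum_Ico_consecutive g (Nat.zero_le t) htk]
    rw [Finset.range_eq_Ico]
  have e2 : ∑ u ∈ Finset.range (k - d),
        B (if u ≤ s then f u else f (u + d)) (if u+1 ≤ s then f (u+1) else f (u+1+d))
      = ∑ u ∈ Finset.Ico 0 s, g u + ∑ u ∈ Finset.Ico s (k-d), g (u + d) := by
    rw [Finset.range_eq_Ico, ← Finset.sum_Ico_consecutive _ (Nat.zero_le s) hsk]
    congr 1
    · apply Finset.sum_congr rfl
      intro u hu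
      simp only [Finset.mem_Ico] at hu
      rw [if_pos (by omega : u ≤ s), if_pos (by omega : u + 1 ≤ s)]
    · apply Finset.sum_congr rfl
      intro u hu
      simp only [Finset.mem_Ico] at hu
      rw [if_neg (by omega : ¬ u + 1 ≤ s)]
      have hfu : (if u ≤ s then f u else f (u + d)) = f (u + d) := by
        by_cases hus : u ≤ s
        · rw [if_pos hus, show u = s from by omega, hf]
          congr 1
          omega
        · rw [if_neg hus]
      rw [hfu, show u + 1 + d = u + d + 1 from by omega]
  have e3 : ∑ u ∈ Finset.Ico s (k-d), g (u + d) = ∑ u ∈ Finset.Ico t k, g u := by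
    rw [Finset.sum_Ico_eq_sum_range, Finset.sum_Ico_eq_sum_range]
    rw [show k - d - s = k - t by omega]
    apply Finset.sum_congr rfl
    intro u _
    rw [show s + u + d = t + u by omega]
  have e4 : ∑ u ∈ Finset.range d, B (f (s+u)) (f (s+u+1)) = ∑ u ∈ Finset.Ico s t, g u := by
    rw [Finset.sum_Ico_eq_sum_range, hd]
  rw [e1, e2, e3, e4]
  ring

private lemma cycle_wt_le (hn : 0 < n) (A : Fin n → Fin n → ℝ) (d : ℕ) (h1 : 1 ≤ d)
    (h2 : d ≤ n) (C : Fin (d+1) → Fin n) (hC : C 0 = C (Fin.last d)) :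
    walkWeight A d C ≤ d * maxCycleMean A := by
  haveI : Nonempty (Fin n) := ⟨⟨0, hn⟩⟩
  set S := { r | ∃ k, 1 ≤ k ∧ k ≤ Fintype.card (Fin n) ∧
    ∃ P : Fin (k + 1) → Fin n, P 0 = P (Fin.last k) ∧ r = walkWeight A k P / (k : ℝ) } with hS
  set M : ℝ := ⨆ p, ⨆ q, A p q with hM
  have hAM : ∀ p q, A p q ≤ M := by
    intro p q
    have h1' : A p q ≤ ⨆ q, A p q := le_ciSup (rbdd _) q
    have h2' : (⨆ q, A p q) ≤ M := le_ciSup (rbdd (fun p => ⨆ q, A p q)) p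
    linarith
  have hbdd : BddAbove S := by
    refine ⟨max 0 M, ?_⟩
    rintro r ⟨k, hk1, hk2, P, hP, rfl⟩
    have hw : walkWeight A k P ≤ (k : ℝ) * max 0 M := by
      unfold walkWeight
      calc ∑ t : Fin k, A (P t.castSucc) (P t.succ)
          ≤ ∑ _t : Fin k, max 0 M :=
            Finset.sum_le_sum (fun t _ => le_trans (hAM _ _) (le_max_right 0 M))
        _ = (k : ℝ) * max 0 M := by
            rw [Finset.sum_const, Finset.card_univ, Fintype.card_fin, nsmul_eq_mul]
    rw [div_le_iff₀ (by exact_mod_cast hk1 : (0:ℝ) < k)]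
    calc walkWeight A k P ≤ (k:ℝ) * max 0 M := hw
      _ = max 0 M * k := by ring
  have hmem : walkWeight A d C / d ∈ S := ⟨d, h1, by simpa using h2, C, hC, rfl⟩
  have hle : walkWeight A d C / d ≤ maxCycleMean A := le_csSup hbdd hmem
  rw [div_le_iff₀ (by exact_mod_cast h1 : (0:ℝ) < d)] at hle
  calc walkWeight A d C ≤ maxCycleMean A * d := hle
    _ = d * maxCycleMean A := by ring

end Aux2
section Aux3

variable {n : ℕ}

private lemma pow_le_star (A : Fin n → Fin n → ℝ) (m : ℕ) (hm : m < n - 1) (i j : Fin n) :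
    mpPow1 A m i j ≤ kleeneStar A i j := by
  have hsup : mpPow1 A m i j
      ≤ ⨆ m' : Fin (Fintype.card (Fin n) - 1), mpPow1 A (m' : ℕ) i j := by
    have := le_ciSup (f := fun m' : Fin (Fintype.card (Fin n) - 1) => mpPow1 A (m' : ℕ) i j)
      (rbdd _) ⟨m, by rw [Fintype.card_fin]; omega⟩
    exact this
  unfold kleeneStar
  by_cases h : i = j
  · subst h
    rw [if_pos rfl]
    exact le_trans hsup (le_max_right _ _)
  · rw [if_neg h]
    exact hsup

private lemma short_walk_le (A : Fin n → Fin n → ℝ) (k : ℕ) (hk1 : 1 ≤ k) (hk2 : k ≤ n - 1)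
    (P : Fin (k+1) → Fin n) :
    walkWeight A k P ≤ kleeneStar A (P 0) (P (Fin.last k)) := by
  have hW : walkWeight A k P ≤ mpPow1 A (k-1) (P 0) (P (Fin.last k)) := by
    have he : k - 1 + 1 = k := by omega
    rw [mpPow1_eq_bW, he]
    exact le_bW A k _ _ P rfl rfl
  exact le_trans hW (pow_le_star A (k-1) (by omega) _ _)

private lemma key_bound (hn : 0 < n) (A : Fin n → Fin n → ℝ) (hrho : maxCycleMean A < 0) :
    ∀ (k : ℕ) (P : Fin (k+1) → Fin n),
      walkWeight A k P ≤ kleeneStar A (P 0) (P (Fin.last k))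
        + maxCycleMean A * max 0 ((k : ℝ) - ((n:ℝ) - 1)) := by
  intro k
  induction k using Nat.strong_induction_on with
  | _ k IH =>
  intro P
  by_cases hk : k < n
  · have hmax0 : max 0 ((k:ℝ) - ((n:ℝ)-1)) = 0 := by
      apply max_eq_left
      have : (k:ℝ) + 1 ≤ (n:ℝ) := by exact_mod_cast hk
      linarith
    rw [hmax0, mul_zero, add_zero]
    rcases Nat.eq_zero_or_pos k with h0 | hpos
    · subst h0
      rw [walkWeight_zero]
      have : P (Fin.last 0) = P 0 := rfl
      rw [this]
      unfold kleeneStar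
      rw [if_pos rfl]
      exact le_max_left _ _
    · exact short_walk_le A k hpos (by omega) P
  · push_neg at hk
    set ρ := maxCycleMean A with hρdef
    set f : ℕ → Fin n := fun u => P ⟨min u k, by omega⟩ with hfdef
    have hfP : ∀ u : Fin (k+1), f u.val = P u := by
      intro u
      simp only [hfdef]
      congr 1
      exact Fin.ext (by simp [Nat.lt_succ_iff.mp u.isLt])
    obtain ⟨u, v, huv, heq⟩ := Fintype.exists_ne_map_eq_of_card_lt
      (fun u : Fin (n+1) => f u.val) (by simp)
    set s := min u.val v.val with hs
    set t := max u.val v.val with ht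
    have hst : s < t := by
      have : u.val ≠ v.val := fun h => huv (Fin.ext h)
      omega
    have htn : t ≤ n := by
      have := u.isLt
      have := v.isLt
      omega
    have hfst : f s = f t := by
      rcases le_total u.val v.val with h | h
      · rw [show s = u.val from by omega, show t = v.val from by omega]
        exact heq
      · rw [show s = v.val from by omega, show t = u.val from by omega]
        exact heq.symm
    set d := t - s with hd
    have hd1 : 1 ≤ d := by omega
    have hdn : d ≤ n := by omega
    have hdk : d ≤ k := by omega
    have hsum := walkWeight_eq_range A k P f hfP
    have hsplice := splice_sum A f s t k hst (by omega) hfst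
    set P' : Fin (k - d + 1) → Fin n :=
      fun w => if w.val ≤ s then f w.val else f (w.val + d) with hP'def
    set C : Fin (d+1) → Fin n := fun w => f (s + w.val) with hCdef
    have hP'w : walkWeight A (k-d) P'
        = ∑ u ∈ Finset.range (k-d),
            A (if u ≤ s then f u else f (u + d)) (if u+1 ≤ s then f (u+1) else f (u+1+d)) := by
      apply walkWeight_eq_range A (k-d) P' (fun u => if u ≤ s then f u else f (u+d))
      intro w
      rfl
    have hCw : walkWeight A d C = ∑ u ∈ Finset.range d, A (f (s+u)) (f (s+u+1)) := by
      apply walkWeight_eq_range A d C (fun u => f (s+u))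
      intro w
      rfl
    have hdecomp : walkWeight A k P = walkWeight A (k-d) P' + walkWeight A d C := by
      rw [hsum, hP'w, hCw, hsplice]
    have hP'0 : P' 0 = P 0 := by
      show (if (0:ℕ) ≤ s then f 0 else f (0 + d)) = P 0
      rw [if_pos (Nat.zero_le s)]
      exact hfP 0
    have hP'l : P' (Fin.last (k-d)) = P (Fin.last k) := by
      have hlast : f k = P (Fin.last k) := hfP (Fin.last k)
      show (if k - d ≤ s then f (k-d) else f (k - d + d)) = P (Fin.last k)
      by_cases h : k - d ≤ s
      · rw [if_pos h, show k - d = s from by omega, hfst, show t = k from by omega, hlast]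
      · rw [if_neg h, show k - d + d = k from by omega, hlast]
    have hcyc : walkWeight A d C ≤ d * ρ := by
      apply cycle_wt_le hn A d hd1 hdn C
      show f (s + 0) = f (s + d)
      rw [Nat.add_zero, show s + d = t from by omega]
      exact hfst
    have hIH := IH (k-d) (by omega) P'
    rw [hP'0, hP'l] at hIH
    have hcast : ((k - d : ℕ) : ℝ) = (k : ℝ) - (d : ℝ) := by
      exact Nat.cast_sub hdk
    rw [hcast] at hIH
    have hd1' : (1:ℝ) ≤ (d:ℝ) := by exact_mod_cast hd1
    have hkn' : (n:ℝ) ≤ (k:ℝ) := by exact_mod_cast hk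
    have hn1 : (1:ℝ) ≤ (n:ℝ) := by exact_mod_cast hn
    have hmaxk : max 0 ((k:ℝ) - ((n:ℝ)-1)) = (k:ℝ) - ((n:ℝ)-1) := by
      apply max_eq_right
      linarith
    have hM1 : (k:ℝ) - (d:ℝ) - ((n:ℝ)-1) ≤ max 0 ((k:ℝ) - (d:ℝ) - ((n:ℝ)-1)) :=
      le_max_right _ _
    have hkey : ρ * max 0 ((k:ℝ) - (d:ℝ) - ((n:ℝ)-1)) + (d:ℝ) * ρ
        ≤ ρ * ((k:ℝ) - ((n:ℝ)-1)) := by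
      have h1 : (k:ℝ) - ((n:ℝ)-1) ≤ max 0 ((k:ℝ) - (d:ℝ) - ((n:ℝ)-1)) + (d:ℝ) := by
        linarith
      have h2 := mul_le_mul_of_nonpos_left h1 (le_of_lt hrho)
      calc ρ * max 0 ((k:ℝ) - (d:ℝ) - ((n:ℝ)-1)) + (d:ℝ) * ρ
          = ρ * (max 0 ((k:ℝ) - (d:ℝ) - ((n:ℝ)-1)) + (d:ℝ)) := by ring
        _ ≤ ρ * ((k:ℝ) - ((n:ℝ)-1)) := h2
    rw [hmaxk]
    calc walkWeight A k P = walkWeight A (k-d) P' + walkWeight A d C := hdecomp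
      _ ≤ (kleeneStar A (P 0) (P (Fin.last k))
            + ρ * max 0 ((k:ℝ) - (d:ℝ) - ((n:ℝ)-1))) + (d:ℝ) * ρ := by
          apply add_le_add hIH hcyc
      _ ≤ kleeneStar A (P 0) (P (Fin.last k)) + ρ * ((k:ℝ) - ((n:ℝ)-1)) := by
          linarith [hkey]

end Aux3
section Aux4

variable {n : ℕ}

private lemma wt_le_K (hn : 0 < n) (A : Fin n → Fin n → ℝ) (hrho : maxCycleMean A < 0)
    (k : ℕ) (P : Fin (k+1) → Fin n) :
    walkWeight A k P ≤ kleeneStar A (P 0) (P (Fin.last k)) := by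
  have h := key_bound hn A hrho k P
  have h2 : maxCycleMean A * max 0 ((k : ℝ) - ((n:ℝ) - 1)) ≤ 0 :=
    mul_nonpos_of_nonpos_of_nonneg (le_of_lt hrho) (le_max_left _ _)
  linarith

private lemma star_diag_nonneg (A : Fin n → Fin n → ℝ) (i : Fin n) :
    0 ≤ kleeneStar A i i := by
  unfold kleeneStar
  rw [if_pos rfl]
  exact le_max_left _ _

private lemma edge_le_K (hn : 0 < n) (A : Fin n → Fin n → ℝ) (hrho : maxCycleMean A < 0)
    (i j : Fin n) : A i j ≤ kleeneStar A i j := by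
  have h := wt_le_K hn A hrho 1 (fun t : Fin 2 => if t.val = 0 then i else j)
  rw [walkWeight_one] at h
  simpa using h

private lemma pow_le_decay (hn : 0 < n) (A : Fin n → Fin n → ℝ) (hrho : maxCycleMean A < 0)
    (m : ℕ) (i j : Fin n) :
    mpPow1 A m i j ≤ kleeneStar A i j
      + maxCycleMean A * max 0 (((m:ℝ)+1) - ((n:ℝ) - 1)) := by
  rw [mpPow1_eq_bW]
  haveI := wkNE (m+1) (Nat.succ_pos m) i j
  apply ciSup_le
  rintro ⟨P, h0, hl⟩
  show walkWeight A (m+1) P ≤ _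
  have h := key_bound hn A hrho (m+1) P
  rw [h0, hl] at h
  have : ((m+1 : ℕ) : ℝ) = (m:ℝ) + 1 := by push_cast; ring
  rw [this] at h
  exact h

private lemma pow_le_K (hn : 0 < n) (A : Fin n → Fin n → ℝ) (hrho : maxCycleMean A < 0)
    (m : ℕ) (i j : Fin n) : mpPow1 A m i j ≤ kleeneStar A i j := by
  have h := pow_le_decay hn A hrho m i j
  have h2 : maxCycleMean A * max 0 (((m:ℝ)+1) - ((n:ℝ) - 1)) ≤ 0 :=
    mul_nonpos_of_nonpos_of_nonneg (le_of_lt hrho) (le_max_left _ _)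
  linarith

private lemma K_le (A : Fin n → Fin n → ℝ) {j l : Fin n} {c : ℝ} (h0 : j = l → 0 ≤ c)
    (hpow : ∀ m : Fin (Fintype.card (Fin n) - 1), mpPow1 A (m:ℕ) j l ≤ c) :
    kleeneStar A j l ≤ c := by
  have hjl_of : IsEmpty (Fin (Fintype.card (Fin n) - 1)) → ∀ p q : Fin n, p = q := by
    intro he p q
    rw [Fintype.card_fin] at he
    have h1 : n - 1 = 0 := by
      by_contra hc
      exact he.elim ⟨0, by omega⟩
    have hn1 : n = 1 := by have := p.isLt; omega
    subst hn1
    exact Subsingleton.elim p q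
  unfold kleeneStar
  by_cases hne : Nonempty (Fin (Fintype.card (Fin n) - 1))
  · haveI := hne
    by_cases h : j = l
    · subst h
      rw [if_pos rfl]
      exact max_le (h0 rfl) (ciSup_le hpow)
    · rw [if_neg h]
      exact ciSup_le hpow
  · haveI := not_nonempty_iff.mp hne
    have hjl := hjl_of ‹_› j l
    rw [if_pos hjl, Real.iSup_of_isEmpty]
    simpa using h0 hjl

/-- `A ⊗ A* ≤ A*` entrywise, in the convenient form. -/
private lemma hAK (hn : 0 < n) (A : Fin n → Fin n → ℝ) (hrho : maxCycleMean A < 0)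
    (i j l : Fin n) : A i j + kleeneStar A j l ≤ kleeneStar A i l := by
  have hedge : A i j ≤ kleeneStar A i j := edge_le_K hn A hrho i j
  have h : kleeneStar A j l ≤ kleeneStar A i l - A i j := by
    apply K_le
    · intro hjl
      subst hjl
      linarith
    · intro m
      have hle : A i j + mpPow1 A (m : ℕ) j l ≤ kleeneStar A i l := by
        rw [mpPow1_eq_bW]
        have : bW A ((m:ℕ)+1) j l ≤ kleeneStar A i l - A i j := by
          haveI := wkNE ((m:ℕ)+1) (Nat.succ_pos _) j l
          apply ciSup_le
          rintro ⟨Q, h0, hl⟩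
          show walkWeight A ((m:ℕ)+1) Q ≤ _
          have hw := wt_le_K hn A hrho ((m:ℕ)+2) (Fin.cases i Q)
          rw [walkWeight_cons] at hw
          rw [show Fin.last ((m:ℕ)+2) = (Fin.last ((m:ℕ)+1)).succ from rfl] at hw
          simp only [Fin.cases_zero, Fin.cases_succ] at hw
          rw [h0, hl] at hw
          linarith
        linarith [this]
      linarith
  linarith

end Aux4
/-- when `ρ(A) < 0`, `x = A* ⊗ b` is the unique solution of `x = (A ⊗ x) ⊕ b`. -/
theorem stmt3 {n : ℕ} (hn : 0 < n) (A : Fin n → Fin n → ℝ) (b : Fin n → ℝ)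
    (hrho : maxCycleMean A < 0) (x : Fin n → ℝ) :
    (∀ i, x i = max (mpMulVec A x i) (b i)) ↔ x = mpMulVec (kleeneStar A) b := by
  haveI : Nonempty (Fin n) := ⟨⟨0, hn⟩⟩
  set ρ := maxCycleMean A with hρdef
  set xs := mpMulVec (kleeneStar A) b with hxsdef
  have le_xs : ∀ (p l : Fin n), kleeneStar A p l + b l ≤ xs p := by
    intro p l
    exact le_ciSup (f := fun l => kleeneStar A p l + b l) (rbdd _) l
  have hxs_ge_b : ∀ i, b i ≤ xs i := by
    intro i
    have := le_xs i i
    have := star_diag_nonneg A i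
    linarith
  have hmp_xs : ∀ i, mpMulVec A xs i ≤ xs i := by
    intro i
    show (⨆ j, (A i j + xs j)) ≤ xs i
    apply ciSup_le
    intro j
    have hj : xs j ≤ xs i - A i j := by
      show (⨆ l, (kleeneStar A j l + b l)) ≤ xs i - A i j
      apply ciSup_le
      intro l
      have h1 := hAK hn A hrho i j l
      have h2 := le_xs i l
      linarith
    linarith
  -- the tail bound: walks with b appended are below xs
  have tail_bd : ∀ (m : ℕ) (Q : Fin (m+1) → Fin n),
      walkWeight A m Q + b (Q (Fin.last m)) ≤ xs (Q 0) := by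
    intro m Q
    have h1 := wt_le_K hn A hrho m Q
    have h2 := le_xs (Q 0) (Q (Fin.last m))
    linarith
  have hx_eq : ∀ i, xs i = max (mpMulVec A xs i) (b i) := by
    intro i
    apply le_antisymm
    · show (⨆ l, (kleeneStar A i l + b l)) ≤ max (mpMulVec A xs i) (b i)
      apply ciSup_le
      intro l
      have hK : kleeneStar A i l ≤ max (mpMulVec A xs i) (b i) - b l := by
        apply K_le
        · intro hil
          subst hil
          have := le_max_right (mpMulVec A xs i) (b i)
          linarith
        · intro m
          rw [mpPow1_eq_bW]
          have : bW A ((m:ℕ)+1) i l ≤ max (mpMulVec A xs i) (b i) - b l := by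
            haveI := wkNE ((m:ℕ)+1) (Nat.succ_pos _) i l
            apply ciSup_le
            rintro ⟨P, h0, hl⟩
            show walkWeight A ((m:ℕ)+1) P ≤ _
            rw [walkWeight_head]
            have htail := tail_bd (m:ℕ) (fun t => P t.succ)
            simp only [Fin.succ_zero_eq_one] at htail
            have hlast : P (Fin.last (m:ℕ)).succ = l := hl
            rw [hlast] at htail
            have hsup : A (P 0) (P 1) + xs (P 1) ≤ mpMulVec A xs (P 0) :=
              le_ciSup (f := fun j => A (P 0) j + xs j) (rbdd _) (P 1)
            rw [h0] at hsup ⊢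
            have := le_max_left (mpMulVec A xs i) (b i)
            linarith
          exact this
      linarith
    · exact max_le (hmp_xs i) (hxs_ge_b i)
  constructor
  · -- uniqueness direction
    intro h
    have hx_ge_b : ∀ p, b p ≤ x p := by
      intro p
      rw [h p]
      exact le_max_right _ _
    have hx_ge_mp : ∀ p, mpMulVec A x p ≤ x p := by
      intro p
      rw [h p]
      exact le_max_left _ _
    -- every walk with b appended is below x
    have hC4 : ∀ (m : ℕ) (P : Fin (m+1) → Fin n),
        walkWeight A m P + b (P (Fin.last m)) ≤ x (P 0) := by
      intro m
      induction m with
      | zero =>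
        intro P
        rw [walkWeight_zero]
        have : P (Fin.last 0) = P 0 := rfl
        rw [this]
        linarith [hx_ge_b (P 0)]
      | succ m IH =>
        intro P
        rw [walkWeight_head]
        have hIH := IH (fun t => P t.succ)
        simp only [Fin.succ_zero_eq_one] at hIH
        have hlast : P (Fin.last m).succ = P (Fin.last (m+1)) := rfl
        rw [hlast] at hIH
        have hsup : A (P 0) (P 1) + x (P 1) ≤ mpMulVec A x (P 0) :=
          le_ciSup (f := fun j => A (P 0) j + x j) (rbdd _) (P 1)
        have := hx_ge_mp (P 0)
        linarith
    -- x ≥ xs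
    have hB1 : ∀ i, xs i ≤ x i := by
      intro i
      show (⨆ l, (kleeneStar A i l + b l)) ≤ x i
      apply ciSup_le
      intro l
      have hK : kleeneStar A i l ≤ x i - b l := by
        apply K_le
        · intro hil
          subst hil
          linarith [hx_ge_b i]
        · intro m
          rw [mpPow1_eq_bW]
          have : bW A ((m:ℕ)+1) i l ≤ x i - b l := by
            haveI := wkNE ((m:ℕ)+1) (Nat.succ_pos _) i l
            apply ciSup_le
            rintro ⟨P, h0, hl⟩
            show walkWeight A ((m:ℕ)+1) P ≤ _
            have := hC4 ((m:ℕ)+1) P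
            rw [h0, hl] at this
            linarith
          exact this
      linarith
    -- iterated bound
    have hB2 : ∀ (k : ℕ) (i : Fin n),
        x i ≤ max (⨆ j, (mpPow1 A k i j + x j)) (xs i) := by
      intro k
      induction k with
      | zero =>
        intro i
        rw [h i]
        apply max_le
        · apply le_trans (le_max_left _ (xs i))
          apply le_of_eq
          rfl
        · linarith [hxs_ge_b i, le_max_right (⨆ j, (mpPow1 A 0 i j + x j)) (xs i)]
      | succ k IH =>
        intro i
        have hstep : x i ≤ max (mpMulVec A x i) (xs i) := by
          rw [h i]
          exact max_le_max (le_refl _) (hxs_ge_b i)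
        have hmp : mpMulVec A x i ≤ max (⨆ l, (mpPow1 A (k+1) i l + x l)) (xs i) := by
          show (⨆ j, (A i j + x j)) ≤ _
          apply ciSup_le
          intro j
          have hIH := IH j
          have ha : A i j + xs j ≤ xs i := by
            have h1 : A i j + xs j ≤ mpMulVec A xs i :=
              le_ciSup (f := fun q => A i q + xs q) (rbdd _) j
            linarith [hmp_xs i]
          have hb : (⨆ l, (mpPow1 A k j l + x l))
              ≤ (⨆ l, (mpPow1 A (k+1) i l + x l)) - A i j := by
            apply ciSup_le
            intro l
            have h1 : A i j + mpPow1 A k j l ≤ mpPow1 A (k+1) i l :=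
              le_ciSup (f := fun q => A i q + mpPow1 A k q l) (rbdd _) j
            have h2 : mpPow1 A (k+1) i l + x l ≤ ⨆ l, (mpPow1 A (k+1) i l + x l) :=
              le_ciSup (f := fun q => mpPow1 A (k+1) i q + x q) (rbdd _) l
            linarith
          have hmax : max (⨆ l, (mpPow1 A k j l + x l)) (xs j)
              ≤ max (⨆ l, (mpPow1 A (k+1) i l + x l)) (xs i) - A i j := by
            apply max_le
            · linarith [le_max_left (⨆ l, (mpPow1 A (k+1) i l + x l)) (xs i)]
            · linarith [le_max_right (⨆ l, (mpPow1 A (k+1) i l + x l)) (xs i)]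
          linarith
        exact le_trans hstep (max_le (hmp) (le_max_right _ _))
    -- decay, conclude x ≤ xs
    have hB3 : ∀ i, x i ≤ xs i := by
      intro i
      set C0 : ℝ := ⨆ j, (kleeneStar A i j + x j) with hC0
      have hSk : ∀ k : ℕ, (⨆ j, (mpPow1 A k i j + x j))
          ≤ C0 + ρ * max 0 (((k:ℝ)+1) - ((n:ℝ)-1)) := by
        intro k
        apply ciSup_le
        intro j
        have h1 := pow_le_decay hn A hrho k i j
        have h2 : kleeneStar A i j + x j ≤ C0 :=
          le_ciSup (f := fun j => kleeneStar A i j + x j) (rbdd _) j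
        linarith
      have hρ0 : ρ < 0 := hrho
      obtain ⟨k, hk⟩ := exists_nat_gt ((n:ℝ) + (C0 - xs i)/(-ρ))
      set X := max 0 (((k:ℝ)+1) - ((n:ℝ)-1)) with hX
      have hXge : (C0 - xs i)/(-ρ) + 1 ≤ X := by
        have h1 : ((k:ℝ)+1) - ((n:ℝ)-1) ≤ X := le_max_right _ _
        linarith
      have hne : ρ ≠ 0 := ne_of_lt hρ0
      have hXmul := mul_le_mul_of_nonneg_right hXge (by linarith : (0:ℝ) ≤ -ρ)
      have h2 : (C0 - xs i)/(-ρ) * (-ρ) = C0 - xs i :=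
        div_mul_cancel₀ _ (neg_ne_zero.mpr hne)
      have h3 : ((C0 - xs i)/(-ρ) + 1) * (-ρ) = (C0 - xs i) + (-ρ) := by
        rw [add_mul, one_mul, h2]
      have hρX : ρ * X ≤ (xs i - C0) + ρ := by
        rw [h3] at hXmul
        nlinarith [hXmul]
      have hSklt : (⨆ j, (mpPow1 A k i j + x j)) < xs i := by
        have := hSk k
        rw [← hX] at this
        calc (⨆ j, (mpPow1 A k i j + x j)) ≤ C0 + ρ * X := this
          _ ≤ C0 + ((xs i - C0) + ρ) := by linarith [hρX]
          _ < xs i := by linarith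
      have := hB2 k i
      have hle : max (⨆ j, (mpPow1 A k i j + x j)) (xs i) ≤ xs i :=
        max_le (le_of_lt hSklt) (le_refl _)
      linarith
    funext i
    exact le_antisymm (hB3 i) (hB1 i)
  · intro h
    subst h
    exact hx_eq
end

section
/- Let A ∈ [0,1]^{n×n}, λ ∈ [0,1], and let x ∈ [0,1]^n satisfy x_i ≤ 1 − λ for all i. Then x is a Łukasiewicz eigenvector of A associated with λ (i.e., A ⊗_L x = λ ⊗_L x) if and only if x_j ≤ min(1 − λ, min_i (1 − a_{ij})) for all j. -/
open Finset

/-- characterization of background Łukasiewicz eigenvectors: a vector with all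
components `≤ 1 - λ` is an eigenvector iff `x_j ≤ min(1 - λ, min_i (1 - a_{ij}))` for all `j`. -/
theorem stmt4 {n : ℕ} (A : Fin n → Fin n → ℝ) (hA : ∀ i j, A i j ∈ Set.Icc (0 : ℝ) 1)
    (lam : ℝ) (hlam : lam ∈ Set.Icc (0 : ℝ) 1)
    (x : Fin n → ℝ) (hx : ∀ i, x i ∈ Set.Icc (0 : ℝ) 1) (hbg : ∀ i, x i ≤ 1 - lam) :
    (∀ i, lukMulVec A x i = lukSMul lam x i) ↔
      ∀ j, x j ≤ min (1 - lam) (⨅ i, (1 - A i j)) := by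
  have hsm : ∀ i, lukSMul lam x i = 0 := by
    intro i
    have : lam + x i - 1 ≤ 0 := by linarith [hbg i]
    simp [lukSMul, max_eq_left this]
  constructor
  · intro h j
    have hne : Nonempty (Fin n) := ⟨j⟩
    refine le_min (hbg j) (le_ciInf fun i => ?_)
    have h0 : lukMulVec A x i = 0 := (h i).trans (hsm i)
    have hle : max 0 (A i j + x j - 1) ≤ lukMulVec A x i :=
      le_ciSup (f := fun j => max 0 (A i j + x j - 1))
        (Set.Finite.bddAbove (Set.finite_range _)) j
    rw [h0] at hle
    have := le_trans (le_max_right 0 (A i j + x j - 1)) hle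
    linarith
  · intro h i
    have hne : Nonempty (Fin n) := ⟨i⟩
    rw [hsm i]
    have hterm : ∀ j, max 0 (A i j + x j - 1) = 0 := by
      intro j
      have h1 : x j ≤ ⨅ i', (1 - A i' j) := le_trans (h j) (min_le_right _ _)
      have h2 : (⨅ i', (1 - A i' j)) ≤ 1 - A i j :=
        ciInf_le (Set.Finite.bddBelow (Set.finite_range _)) i
      have : A i j + x j - 1 ≤ 0 := by linarith
      simp [max_eq_left this]
    simp only [lukMulVec, hterm]
    exact ciSup_const
end

section
/- Let A ∈ [0,1]^{n×n} and λ ∈ [0,1) .There exists a nonzero background Łukasiewicz eigenvector of A associated with λ if and only if there exists a column index j with max_i a_{ij} < 1. -/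
open Finset

/-- for `λ ∈ [0,1)`, a nonzero background Łukasiewicz eigenvector exists iff some
column of `A` has maximum entry `< 1`. -/
theorem stmt5 {n : ℕ} (hn : 0 < n) (A : Fin n → Fin n → ℝ)
    (hA : ∀ i j, A i j ∈ Set.Icc (0 : ℝ) 1) (lam : ℝ) (hlam0 : 0 ≤ lam) (hlam1 : lam < 1) :
    (∃ x : Fin n → ℝ, (∀ i, x i ∈ Set.Icc (0 : ℝ) 1) ∧ (∀ i, x i ≤ 1 - lam) ∧ x ≠ 0 ∧
        ∀ i, lukMulVec A x i = lukSMul lam x i) ↔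
      ∃ j, (⨆ i, A i j) < 1 := by
  haveI : Nonempty (Fin n) := Fin.pos_iff_nonempty.mp hn
  constructor
  · rintro ⟨x, hx01, hxb, hx0, heig⟩
    obtain ⟨j, hj⟩ : ∃ j, x j ≠ 0 := Function.ne_iff.mp hx0
    have hxj : 0 < x j := lt_of_le_of_ne (hx01 j).1 (Ne.symm hj)
    refine ⟨j, ?_⟩
    have hsup : ∀ i, lukMulVec A x i = 0 := by
      intro i
      have h1 : lukSMul lam x i = 0 := by
        have := hxb i
        unfold lukSMul
        exact max_eq_left (by linarith)
      rw [heig i, h1]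
    have key : ∀ i, A i j ≤ 1 - x j := by
      intro i
      have h2 : max 0 (A i j + x j - 1) ≤ lukMulVec A x i :=
        le_ciSup (f := fun k => max 0 (A i k + x k - 1))
          (Set.Finite.bddAbove (Set.finite_range _)) j
      rw [hsup i] at h2
      have h3 := le_trans (le_max_right 0 (A i j + x j - 1)) h2
      linarith
    calc ⨆ i, A i j ≤ 1 - x j := ciSup_le key
      _ < 1 := by linarith
  · rintro ⟨j, hj⟩
    set s := ⨆ i, A i j with hsdef
    have hs : ∀ i, A i j ≤ s := fun i =>
      le_ciSup (f := fun i => A i j) (Set.Finite.bddAbove (Set.finite_range _)) i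
    set c := min (1 - lam) (1 - s) with hcdef
    have hc0 : 0 < c := lt_min (by linarith) (by linarith)
    have hcl : c ≤ 1 - lam := min_le_left _ _
    have hcs : c ≤ 1 - s := min_le_right _ _
    refine ⟨fun k => if k = j then c else 0, ?_, ?_, ?_, ?_⟩
    · intro i
      by_cases h : i = j <;> simp [h] <;> constructor <;> linarith
    · intro i
      by_cases h : i = j <;> simp [h] <;> linarith
    · intro h
      have := congrFun h j
      simp at this
      linarith
    · intro i
      have h1 : lukSMul lam (fun k => if k = j then c else 0) i = 0 := by
        unfold lukSMul
        by_cases h : i = j <;> simp [h] <;> linarith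
      rw [h1]
      unfold lukMulVec
      apply le_antisymm
      · apply ciSup_le
        intro k
        apply max_le le_rfl
        by_cases h : k = j
        · subst h
          have := hs i
          simp
          linarith
        · have := (hA i k).2
          simp [h]
          linarith
      · refine le_trans ?_ (le_ciSup (Set.Finite.bddAbove (Set.finite_range _)) j)
        exact le_max_left _ _
end

section
/- Let A ∈ [0,1]^{n×n} have maximum cycle mean ρ(A) < 1. Then for every λ ∈ [0,1) there exists a nonzero background Łukasiewicz eigenvector of A associated with λ. -/
open Finset

lemma exists_good_col {n : ℕ} (hn : 0 < n) (A : Fin n → Fin n → ℝ)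
    (hA : ∀ i j, A i j ∈ Set.Icc (0 : ℝ) 1) (hrho : maxCycleMean A < 1) :
    ∃ j0 : Fin n, ∀ i, A i j0 < 1 := by
  by_contra h
  push_neg at h
  choose f hf using h
  have hf1 : ∀ j, A (f j) j = 1 := fun j => le_antisymm (hA (f j) j).2 (hf j)
  -- pigeonhole: iterates of f repeat
  have hni : ¬ Function.Injective (fun m : Fin (n + 1) => f^[(m : ℕ)] ⟨0, hn⟩) := by
    intro hinj
    have := Fintype.card_le_of_injective _ hinj
    simp at this
  rw [Function.not_injective_iff] at hni
  obtain ⟨s, t, heq, hne⟩ := hni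
  -- wlog s < t
  have key : ∀ s t : Fin (n + 1), (s : ℕ) < (t : ℕ) →
      f^[(s : ℕ)] ⟨0, hn⟩ = f^[(t : ℕ)] ⟨0, hn⟩ → False := by
    intro s t hst heq
    set j0 : Fin n := ⟨0, hn⟩
    set k : ℕ := (t : ℕ) - (s : ℕ) with hk
    have hk1 : 1 ≤ k := by omega
    have hkn : k ≤ n := by omega
    set y : Fin n := f^[(s : ℕ)] j0 with hy
    have hcyc : f^[k] y = y := by
      rw [hy, ← Function.iterate_add_apply]
      have : k + (s : ℕ) = (t : ℕ) := by omega
      rw [this, ← heq]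
    set P : Fin (k + 1) → Fin n := fun m => f^[k - (m : ℕ)] y with hP
    have hP0 : P 0 = P (Fin.last k) := by
      simp [hP, Fin.last, hcyc]
    have hterm : ∀ u : Fin k, A (P u.castSucc) (P u.succ) = 1 := by
      intro u
      have hu : (u : ℕ) < k := u.isLt
      have h1 : P u.castSucc = f (P u.succ) := by
        simp only [hP, Fin.coe_castSucc, Fin.val_succ]
        have : k - (u : ℕ) = (k - ((u : ℕ) + 1)) + 1 := by omega
        rw [this, Function.iterate_succ_apply']
      rw [h1]
      exact hf1 _
    have hw : walkWeight A k P = k := by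
      unfold walkWeight
      rw [Finset.sum_congr rfl (fun u _ => hterm u)]
      simp
    have hmem : (1 : ℝ) ∈ { r | ∃ k, 1 ≤ k ∧ k ≤ Fintype.card (Fin n) ∧
        ∃ P : Fin (k + 1) → Fin n, P 0 = P (Fin.last k) ∧ r = walkWeight A k P / (k : ℝ) } := by
      refine ⟨k, hk1, by simpa using hkn, P, hP0, ?_⟩
      rw [hw]
      field_simp
    have hbdd : BddAbove { r | ∃ k, 1 ≤ k ∧ k ≤ Fintype.card (Fin n) ∧
        ∃ P : Fin (k + 1) → Fin n, P 0 = P (Fin.last k) ∧ r = walkWeight A k P / (k : ℝ) } := by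
      refine ⟨1, fun r hr => ?_⟩
      obtain ⟨k', hk'1, _, P', _, hr⟩ := hr
      have hwle : walkWeight A k' P' ≤ (k' : ℝ) := by
        unfold walkWeight
        calc ∑ u : Fin k', A (P' u.castSucc) (P' u.succ) ≤ ∑ _u : Fin k', (1 : ℝ) :=
              Finset.sum_le_sum (fun u _ => (hA _ _).2)
          _ = (k' : ℝ) := by simp
      rw [hr]
      rw [div_le_one (by exact_mod_cast hk'1)]
      simpa using hwle
    have : (1 : ℝ) ≤ maxCycleMean A := le_csSup hbdd hmem
    linarith
  rcases lt_or_gt_of_ne (fun hv : (s : ℕ) = (t : ℕ) => hne (Fin.ext hv)) with hlt | hgt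
  · exact key s t hlt heq
  · exact key t s hgt heq.symm

/-- if `ρ(A) < 1` then for every `λ ∈ [0,1)` there is a nonzero background
Łukasiewicz eigenvector associated with `λ`. -/
theorem stmt6 {n : ℕ} (hn : 0 < n) (A : Fin n → Fin n → ℝ)
    (hA : ∀ i j, A i j ∈ Set.Icc (0 : ℝ) 1) (hrho : maxCycleMean A < 1)
    (lam : ℝ) (hlam0 : 0 ≤ lam) (hlam1 : lam < 1) :
    ∃ x : Fin n → ℝ, (∀ i, x i ∈ Set.Icc (0 : ℝ) 1) ∧ (∀ i, x i ≤ 1 - lam) ∧ x ≠ 0 ∧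
      ∀ i, lukMulVec A x i = lukSMul lam x i := by
  haveI : Nonempty (Fin n) := ⟨⟨0, hn⟩⟩
  obtain ⟨j0, hj0⟩ := exists_good_col hn A hA hrho
  set c : ℝ := Finset.univ.sup' (Finset.univ_nonempty) (fun i => A i j0) with hc
  have hclt : c < 1 := by
    rw [hc]
    exact (Finset.sup'_lt_iff _).2 (fun i _ => hj0 i)
  have hc0 : 0 ≤ c := le_trans (hA (Classical.arbitrary (Fin n)) j0).1
    (Finset.le_sup' (fun i => A i j0) (Finset.mem_univ (Classical.arbitrary (Fin n))))
  set ε : ℝ := min (1 - lam) (1 - c) with hε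
  have hε0 : 0 < ε := lt_min (by linarith) (by linarith)
  have hεlam : ε ≤ 1 - lam := min_le_left _ _
  have hεc : ε ≤ 1 - c := min_le_right _ _
  set x : Fin n → ℝ := fun j => if j = j0 then ε else 0 with hx
  have hxle : ∀ i, x i ≤ ε := by
    intro i; rw [hx]; dsimp only
    split <;> [exact le_refl _; exact le_of_lt hε0]
  refine ⟨x, ?_, ?_, ?_, ?_⟩
  · intro i
    constructor
    · rw [hx]; dsimp only; split <;> [exact le_of_lt hε0; exact le_refl _]
    · exact le_trans (hxle i) (by linarith)
  · intro i; exact le_trans (hxle i) hεlam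
  · intro hzero
    have : x j0 = 0 := congrFun hzero j0
    rw [hx] at this; simp at this; linarith
  · intro i
    have hL : lukMulVec A x i = 0 := by
      have hfun : (fun j => max 0 (A i j + x j - 1)) = fun _ => (0 : ℝ) := by
        funext j
        rw [max_eq_left]
        rw [hx]; dsimp only
        by_cases hj : j = j0
        · rw [if_pos hj, hj]
          have : A i j0 ≤ c := Finset.le_sup' (fun i => A i j0) (Finset.mem_univ i)
          linarith
        · rw [if_neg hj]
          have := (hA i j).2
          linarith
      rw [lukMulVec, hfun, ciSup_const]
    have hR : lukSMul lam x i = 0 := by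
      rw [lukSMul, max_eq_left]
      have := le_trans (hxle i) hεlam
      linarith
    rw [hL, hR]
end

section
/- Let A ∈ [0,1]^{n×n} and λ ∈ [0,1]. Then A has a pure Łukasiewicz eigenvector associated with λ if and only if ρ(A) ≤ λ and max_{i,j} ((A^(λ))*)_{ij} ≤ λ. -/
open Finset

namespace Stmt7Aux

open Finset

variable {n : ℕ}

/-- ℕ-indexed walk weight. -/
noncomputable def W (B : Fin n → Fin n → ℝ) (k : ℕ) (Q : ℕ → Fin n) : ℝ :=
  ∑ t ∈ Finset.range k, B (Q t) (Q (t + 1))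

lemma bddf {ι : Type*} [Finite ι] (f : ι → ℝ) : BddAbove (Set.range f) := (Set.finite_range f).bddAbove

lemma pow_succ_def (B : Fin n → Fin n → ℝ) (s : ℕ) (i j : Fin n) :
    mpPow1 B (s + 1) i j = ⨆ t, (B i t + mpPow1 B s t j) := rfl

lemma pow_step (B : Fin n → Fin n → ℝ) (s : ℕ) (i t j : Fin n) :
    B i t + mpPow1 B s t j ≤ mpPow1 B (s + 1) i j := by
  rw [pow_succ_def]
  exact le_ciSup (f := fun t => B i t + mpPow1 B s t j) (bddf _) t

lemma walk_le_pow (B : Fin n → Fin n → ℝ) :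
    ∀ (k : ℕ) (Q : ℕ → Fin n), W B (k + 1) Q ≤ mpPow1 B k (Q 0) (Q (k + 1))
  | 0, Q => by simp [W, mpPow1]
  | (k+1), Q => by
      have h1 : W B (k + 2) Q = W B (k+1) (fun t => Q (t+1)) + B (Q 0) (Q 1) :=
        Finset.sum_range_succ' _ _
      have h2 := walk_le_pow B k (fun t => Q (t+1))
      calc W B (k+2) Q = B (Q 0) (Q 1) + W B (k+1) (fun t => Q (t+1)) := by rw [h1]; ring
        _ ≤ B (Q 0) (Q 1) + mpPow1 B k (Q 1) (Q (k+2)) := add_le_add_right h2 _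
        _ ≤ mpPow1 B (k+1) (Q 0) (Q (k+2)) := pow_step B k _ _ _

lemma pow_eq_walk (hn : 0 < n) (B : Fin n → Fin n → ℝ) :
    ∀ (k : ℕ) (i j : Fin n), ∃ Q : ℕ → Fin n, Q 0 = i ∧ Q (k+1) = j ∧
      mpPow1 B k i j = W B (k+1) Q
  | 0, i, j => ⟨fun t => if t = 0 then i else j, rfl, rfl, by simp [W, mpPow1]⟩
  | (k+1), i, j => by
      haveI : Nonempty (Fin n) := ⟨⟨0, hn⟩⟩
      obtain ⟨m0, hm0⟩ := Finite.exists_max (fun t => B i t + mpPow1 B k t j)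
      obtain ⟨Q', h0, h1, h2⟩ := pow_eq_walk hn B k m0 j
      refine ⟨fun t => match t with | 0 => i | (s+1) => Q' s, rfl, h1, ?_⟩
      have hsup : mpPow1 B (k+1) i j = B i m0 + mpPow1 B k m0 j := by
        rw [pow_succ_def]
        exact le_antisymm (ciSup_le hm0) (le_ciSup (f := fun t => B i t + mpPow1 B k t j) (bddf _) m0)
      have hW : W B (k+2) (fun t => match t with | 0 => i | (s+1) => Q' s)
          = W B (k+1) Q' + B i (Q' 0) := Finset.sum_range_succ' _ _
      rw [hsup, h2, hW, h0]; ring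

lemma tele (B : Fin n → Fin n → ℝ) (y : Fin n → ℝ) (h : ∀ i j, B i j + y j ≤ y i) :
    ∀ (k : ℕ) (Q : ℕ → Fin n), W B k Q ≤ y (Q 0) - y (Q k)
  | 0, Q => by simp [W]
  | (k+1), Q => by
      have h1 : W B (k+1) Q = W B k Q + B (Q k) (Q (k+1)) := Finset.sum_range_succ _ _
      have h2 := tele B y h k Q
      have h3 := h (Q k) (Q (k+1))
      rw [h1]; linarith

lemma walkWeight_of_Q (M : Fin n → Fin n → ℝ) (k : ℕ) (Q : ℕ → Fin n) :
    walkWeight M k (fun t : Fin (k+1) => Q t) = W M k Q := by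
  unfold walkWeight W
  rw [← Fin.sum_univ_eq_sum_range (fun m => M (Q m) (Q (m+1))) k]
  rfl

lemma walkWeight_eq_W (M : Fin n → Fin n → ℝ) (k : ℕ) (P : Fin (k+1) → Fin n) :
    walkWeight M k P
      = W M k (fun t => P ⟨min t k, Nat.lt_succ_of_le (Nat.min_le_right t k)⟩) := by
  rw [← walkWeight_of_Q]
  congr 1
  funext t
  congr 1
  ext
  simp [Nat.min_eq_left (Nat.le_of_lt_succ t.isLt)]

lemma WAB (A : Fin n → Fin n → ℝ) (lam : ℝ) (k : ℕ) (Q : ℕ → Fin n) :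
    W A k Q = W (fun i j => A i j - lam) k Q + k * lam := by
  unfold W
  rw [Finset.sum_sub_distrib]
  simp [Finset.sum_const, Finset.card_range, nsmul_eq_mul]

end Stmt7Aux
namespace Stmt7Aux

open Finset

variable {n : ℕ}

lemma star_diag_nonneg (B : Fin n → Fin n → ℝ) (i : Fin n) : 0 ≤ kleeneStar B i i := by
  unfold kleeneStar
  rw [if_pos rfl]
  exact le_max_left _ _

/-- Walk shortening: if every closed walk of length `1..n` has nonpositive weight, then every
walk weight is bounded by the corresponding Kleene star entry. -/
lemma claimC (B : Fin n → Fin n → ℝ)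
    (hcyc : ∀ (k : ℕ) (Q : ℕ → Fin n), 1 ≤ k → k ≤ n → Q 0 = Q k → W B k Q ≤ 0) :
    ∀ (k : ℕ) (Q : ℕ → Fin n), W B (k+1) Q ≤ kleeneStar B (Q 0) (Q (k+1)) := by
  intro k
  induction k using Nat.strong_induction_on with
  | _ k IH =>
  intro Q
  rcases lt_or_ge (k+1) n with hlt | hge
  · by_cases hc : Q 0 = Q (k+1)
    · have h0 := hcyc (k+1) Q (by omega) (by omega) hc
      have hd : 0 ≤ kleeneStar B (Q 0) (Q (k+1)) := by
        rw [hc]; exact star_diag_nonneg B _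
      linarith
    · have h1 := walk_le_pow B k Q
      have hk' : k < Fintype.card (Fin n) - 1 := by rw [Fintype.card_fin]; omega
      have h2 : mpPow1 B k (Q 0) (Q (k+1)) ≤
          ⨆ m : Fin (Fintype.card (Fin n) - 1), mpPow1 B (m : ℕ) (Q 0) (Q (k+1)) :=
        le_ciSup (f := fun m : Fin (Fintype.card (Fin n) - 1) =>
          mpPow1 B (m : ℕ) (Q 0) (Q (k+1))) (bddf _) (⟨k, hk'⟩ : Fin _)
      unfold kleeneStar
      rw [if_neg hc]
      exact h1.trans h2
  · -- pigeonhole: a repeated vertex among Q 0, ..., Q n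
    obtain ⟨a, b, hab, hbn, hQab⟩ : ∃ a b : ℕ, a < b ∧ b ≤ n ∧ Q a = Q b := by
      obtain ⟨s, t, hst, h⟩ := Fintype.exists_ne_map_eq_of_card_lt
        (fun u : Fin (n+1) => Q u) (by simp)
      rcases lt_or_gt_of_ne hst with hlt' | hlt'
      · exact ⟨s, t, hlt', by have := t.isLt; omega, h⟩
      · exact ⟨t, s, hlt', by have := s.isLt; omega, h.symm⟩
    set d := b - a with hdd
    set r := (k+1) - b with hrr
    have hbd : b = a + d := by omega
    have hkar : k + 1 = a + (d + r) := by omega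
    set Q' : ℕ → Fin n := fun t => if t < a then Q t else Q (t + d) with hQ'
    have hQ'le : ∀ t, t ≤ a → Q' t = Q t := by
      intro t ht
      rcases eq_or_lt_of_le ht with h' | h'
      · subst h'
        simp only [hQ', if_neg (lt_irrefl t)]
        rw [← hbd, ← hQab]
      · simp [hQ', h']
    have hQ'ge : ∀ t, a ≤ t → Q' t = Q (t + d) := fun t ht => if_neg (by omega)
    have hsplit : W B (k+1) Q
        = W B a Q + W B d (fun t => Q (a + t)) + W B r (fun t => Q (a + (d + t))) := by
      conv_lhs => rw [hkar]
      unfold W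
      rw [Finset.sum_range_add, Finset.sum_range_add]
      simp only [Nat.add_assoc]
      ring
    have hmid : W B d (fun t => Q (a + t)) ≤ 0 := by
      refine hcyc d _ (by omega) (by omega) ?_
      show Q (a + 0) = Q (a + d)
      rw [Nat.add_zero, ← hbd]
      exact hQab
    have hsplice : W B (a + r) Q' = W B a Q + W B r (fun t => Q (a + (d + t))) := by
      unfold W
      rw [Finset.sum_range_add]
      congr 1
      · refine Finset.sum_congr rfl fun t ht => ?_
        rw [Finset.mem_range] at ht
        rw [hQ'le t (by omega), hQ'le (t+1) (by omega)]
      · refine Finset.sum_congr rfl fun t _ => ?_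
        rw [hQ'ge (a+t) (by omega), hQ'ge (a+t+1) (by omega)]
        have e1 : a + t + d = a + (d + t) := by omega
        have e2 : a + t + 1 + d = a + (d + t) + 1 := by omega
        rw [e1, e2]
        rfl
    have hQ'0 : Q' 0 = Q 0 := hQ'le 0 (Nat.zero_le a)
    have hQ'end : Q' (a + r) = Q (k+1) := by
      rw [hQ'ge (a+r) (by omega)]
      congr 1
      omega
    have hle : W B (k+1) Q ≤ W B (a+r) Q' := by rw [hsplit, hsplice]; linarith
    rcases Nat.eq_zero_or_pos (a + r) with h0 | hpos
    · have hcl : Q 0 = Q (k+1) := by rw [← hQ'0, ← hQ'end, h0]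
      have h1 := hcyc (k+1) Q (by omega) (by omega) hcl
      have hd2 : 0 ≤ kleeneStar B (Q 0) (Q (k+1)) := by
        rw [hcl]; exact star_diag_nonneg B _
      linarith
    · obtain ⟨k'', hk''⟩ : ∃ k'', a + r = k'' + 1 := ⟨a + r - 1, by omega⟩
      have hlt' : k'' < k := by omega
      have hIH := IH k'' hlt' Q'
      rw [hk''] at hle hQ'end
      calc W B (k+1) Q ≤ W B (k''+1) Q' := hle
        _ ≤ kleeneStar B (Q' 0) (Q' (k''+1)) := hIH
        _ = kleeneStar B (Q 0) (Q (k+1)) := by rw [hQ'0, hQ'end]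

lemma pow_le_star (hn : 0 < n) (B : Fin n → Fin n → ℝ)
    (hcyc : ∀ (k : ℕ) (Q : ℕ → Fin n), 1 ≤ k → k ≤ n → Q 0 = Q k → W B k Q ≤ 0)
    (s : ℕ) (i j : Fin n) : mpPow1 B s i j ≤ kleeneStar B i j := by
  obtain ⟨Q, h0, h1, h2⟩ := pow_eq_walk hn B s i j
  rw [h2, ← h0, ← h1]
  exact claimC B hcyc s Q

end Stmt7Aux
namespace Stmt7Aux

open Finset

variable {n : ℕ}

/-- Forward extraction: from a "sub-eigenvector" `y` with `B i j + y j ≤ y i`, `0 ≤ y ≤ lam`,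
deduce nonpositivity of closed walks and the Kleene-star bound. -/
lemma extract (hn : 0 < n) (lam : ℝ) (hlam0 : 0 ≤ lam) (B : Fin n → Fin n → ℝ)
    (y : Fin n → ℝ) (hy0 : ∀ i, 0 ≤ y i) (hyl : ∀ i, y i ≤ lam)
    (hkey : ∀ i j, B i j + y j ≤ y i) :
    (∀ (k : ℕ) (Q : ℕ → Fin n), Q 0 = Q k → W B k Q ≤ 0) ∧
    (∀ i j, kleeneStar B i j ≤ lam) := by
  constructor
  · intro k Q hQ
    have h := tele B y hkey k Q
    rw [hQ] at h
    linarith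
  · have hpow : ∀ (s : ℕ) (i j : Fin n), mpPow1 B s i j ≤ y i - y j := by
      intro s
      induction s with
      | zero =>
        intro i j
        have := hkey i j
        have := hy0 j
        show B i j ≤ y i - y j
        linarith
      | succ s ih =>
        intro i j
        haveI : Nonempty (Fin n) := ⟨⟨0, hn⟩⟩
        rw [pow_succ_def]
        refine ciSup_le fun t => ?_
        have h1 := ih t j
        have h2 := hkey i t
        linarith
    intro i j
    have hb : ∀ m : Fin (Fintype.card (Fin n) - 1), mpPow1 B (m : ℕ) i j ≤ lam := by
      intro m
      have h1 := hpow (m : ℕ) i j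
      have h2 := hy0 j
      have h3 := hyl i
      linarith
    unfold kleeneStar
    split_ifs with h
    · subst h
      refine max_le hlam0 (Real.iSup_le (fun m => ?_) hlam0)
      have h1 := hpow (m : ℕ) i i
      have h2 := hy0 i
      have h3 := hyl i
      linarith
    · exact Real.iSup_le hb hlam0

/-- Backward construction: build the fixed point `y i = ⨆ k, (B*)_{ik}`. -/
lemma construct (hn : 0 < n) (lam : ℝ) (B : Fin n → Fin n → ℝ)
    (hcyc : ∀ (k : ℕ) (Q : ℕ → Fin n), 1 ≤ k → k ≤ n → Q 0 = Q k → W B k Q ≤ 0)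
    (hK : ∀ i j, kleeneStar B i j ≤ lam) :
    ∃ y : Fin n → ℝ, (∀ i, 0 ≤ y i) ∧ (∀ i, y i ≤ lam) ∧
      ∀ i, (⨆ j, max 0 (B i j + y j)) = y i := by
  haveI : Nonempty (Fin n) := ⟨⟨0, hn⟩⟩
  refine ⟨fun i => ⨆ k, kleeneStar B i k, ?_, ?_, ?_⟩ <;>
    [skip; skip; skip]
  case _ =>
    intro i
    exact le_trans (star_diag_nonneg B i)
      (le_ciSup (f := fun k => kleeneStar B i k) (bddf _) i)
  case _ =>
    intro i
    exact ciSup_le fun k => hK i k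
  case _ =>
    intro i
    set y : Fin n → ℝ := fun i => ⨆ k, kleeneStar B i k with hy
    have hKy : ∀ i k, kleeneStar B i k ≤ y i :=
      fun i k => le_ciSup (f := fun k => kleeneStar B i k) (bddf _) k
    have hy0 : ∀ i, 0 ≤ y i := fun i => le_trans (star_diag_nonneg B i) (hKy i i)
    have hpy : ∀ (s : ℕ) (i j : Fin n), mpPow1 B s i j ≤ y i :=
      fun s i j => (pow_le_star hn B hcyc s i j).trans (hKy i j)
    have hkey : ∀ i j, B i j + y j ≤ y i := by
      intro i j
      have hBij : B i j ≤ y i := hpy 0 i j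
      have h0 : 0 ≤ y i - B i j := by linarith
      have hyj : y j ≤ y i - B i j := by
        refine Real.iSup_le (fun k => ?_) h0
        have hcore : ∀ (m : Fin (Fintype.card (Fin n) - 1)),
            mpPow1 B (m : ℕ) j k ≤ y i - B i j := by
          intro m
          have h1 : B i j + mpPow1 B (m : ℕ) j k ≤ mpPow1 B ((m : ℕ) + 1) i k :=
            pow_step B (m : ℕ) i j k
          have h2 := hpy ((m : ℕ) + 1) i k
          linarith
        show kleeneStar B j k ≤ y i - B i j
        unfold kleeneStar
        split_ifs with h
        · subst h
          exact max_le h0 (Real.iSup_le hcore h0)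
        · exact Real.iSup_le hcore h0
      linarith
    apply le_antisymm
    · exact ciSup_le fun j => max_le (hy0 i) (hkey i j)
    · have hT0 : 0 ≤ ⨆ j, max 0 (B i j + y j) :=
        le_trans (le_max_left _ (B i i + y i))
          (le_ciSup (f := fun j => max 0 (B i j + y j)) (bddf _) i)
      have hTpow : ∀ (s : ℕ) (k : Fin n), mpPow1 B s i k ≤ ⨆ j, max 0 (B i j + y j) := by
        intro s k
        cases s with
        | zero =>
          have h1 : B i k ≤ max 0 (B i k + y k) := by
            have := hy0 k
            have := le_max_right (0:ℝ) (B i k + y k)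
            show B i k ≤ _
            linarith
          exact h1.trans (le_ciSup (f := fun j => max 0 (B i j + y j)) (bddf _) k)
        | succ s =>
          rw [pow_succ_def]
          refine ciSup_le fun t => ?_
          have h1 : mpPow1 B s t k ≤ y t := hpy s t k
          have h2 := le_max_right (0:ℝ) (B i t + y t)
          have h3 : max 0 (B i t + y t) ≤ ⨆ j, max 0 (B i j + y j) :=
            le_ciSup (f := fun j => max 0 (B i j + y j)) (bddf _) t
          linarith
      refine ciSup_le fun k => ?_
      show kleeneStar B i k ≤ _
      unfold kleeneStar
      split_ifs with h
      · exact max_le hT0 (Real.iSup_le (fun m => hTpow (m : ℕ) i) hT0)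
      · exact Real.iSup_le (fun m => hTpow (m : ℕ) k) hT0

end Stmt7Aux
/-- `A` has a pure Łukasiewicz eigenvector associated with `λ` iff `ρ(A) ≤ λ` and
`max_{i,j} ((A^{(λ)})*)_{ij} ≤ λ`. -/
theorem stmt7 {n : ℕ} (hn : 0 < n) (A : Fin n → Fin n → ℝ)
    (hA : ∀ i j, A i j ∈ Set.Icc (0 : ℝ) 1) (lam : ℝ) (hlam : lam ∈ Set.Icc (0 : ℝ) 1) :
    (∃ x : Fin n → ℝ, (∀ i, x i ∈ Set.Icc (0 : ℝ) 1) ∧ (∀ i, 1 - lam ≤ x i) ∧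
        ∀ i, lukMulVec A x i = lukSMul lam x i) ↔
      (maxCycleMean A ≤ lam ∧
        ∀ i j, kleeneStar (fun i j => A i j - lam) i j ≤ lam) := by
  open Stmt7Aux in
  haveI : Nonempty (Fin n) := ⟨⟨0, hn⟩⟩
  constructor
  · rintro ⟨x, hx01, hxp, heig⟩
    -- set up the shifted vector y
    have hy0 : ∀ i, 0 ≤ x i - (1 - lam) := fun i => by linarith [hxp i]
    have hyl : ∀ i, x i - (1 - lam) ≤ lam := fun i => by linarith [(hx01 i).2]
    have hkey : ∀ i j, (fun i j => A i j - lam) i j + (x j - (1 - lam)) ≤ x i - (1 - lam) := by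
      intro i j
      have h1 : max 0 (A i j + x j - 1) ≤ lukMulVec A x i :=
        le_ciSup (f := fun j => max 0 (A i j + x j - 1)) (Stmt7Aux.bddf _) j
      rw [heig i] at h1
      have h2 : lukSMul lam x i = x i - (1 - lam) := by
        unfold lukSMul
        have he : lam + x i - 1 = x i - (1 - lam) := by ring
        rw [he, max_eq_right (hy0 i)]
      rw [h2] at h1
      have h3 : A i j + x j - 1 ≤ x i - (1 - lam) :=
        le_trans (le_max_right _ _) h1
      show A i j - lam + (x j - (1 - lam)) ≤ x i - (1 - lam)
      linarith
    have hex := Stmt7Aux.extract hn lam hlam.1 (fun i j => A i j - lam)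
      (fun i => x i - (1 - lam)) hy0 hyl hkey
    refine ⟨?_, hex.2⟩
    -- maximum cycle mean bound
    unfold maxCycleMean
    refine Real.sSup_le ?_ hlam.1
    rintro r ⟨k, hk1, hkn, P, hP, rfl⟩
    have hQ : walkWeight A k P
        = Stmt7Aux.W A k (fun t => P ⟨min t k, Nat.lt_succ_of_le (Nat.min_le_right t k)⟩) :=
      Stmt7Aux.walkWeight_eq_W A k P
    set Q : ℕ → Fin n := fun t => P ⟨min t k, Nat.lt_succ_of_le (Nat.min_le_right t k)⟩ with hQdef
    have hend : Q 0 = Q k := by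
      have e0 : Q 0 = P 0 := by
        simp only [hQdef]
        congr 1
      have e1 : Q k = P (Fin.last k) := by
        simp only [hQdef]
        congr 1
        ext
        simp
      rw [e0, e1, hP]
    have h4 := hex.1 k Q hend
    have h5 := Stmt7Aux.WAB A lam k Q
    have hk0 : (0:ℝ) < (k : ℝ) := by exact_mod_cast hk1
    rw [div_le_iff₀ hk0]
    have hcm : (k : ℝ) * lam = lam * (k : ℝ) := mul_comm _ _
    rw [hQ]
    linarith
  · rintro ⟨hrho, hK⟩
    -- derive the cycle condition from the max cycle mean bound
    have hbdd : BddAbove { r | ∃ k, 1 ≤ k ∧ k ≤ Fintype.card (Fin n) ∧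
        ∃ P : Fin (k + 1) → Fin n, P 0 = P (Fin.last k) ∧ r = walkWeight A k P / (k : ℝ) } := by
      refine ⟨1, ?_⟩
      rintro r ⟨k, hk1, hkn, P, hP, rfl⟩
      have hw : walkWeight A k P ≤ (k : ℝ) := by
        unfold walkWeight
        calc ∑ t : Fin k, A (P t.castSucc) (P t.succ)
            ≤ ∑ _t : Fin k, (1:ℝ) := Finset.sum_le_sum fun t _ => (hA _ _).2
          _ = (k : ℝ) := by simp
      have hk0 : (0:ℝ) < (k : ℝ) := by exact_mod_cast hk1
      rw [div_le_one hk0]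
      exact hw
    have hcyc : ∀ (k : ℕ) (Q : ℕ → Fin n), 1 ≤ k → k ≤ n → Q 0 = Q k →
        Stmt7Aux.W (fun i j => A i j - lam) k Q ≤ 0 := by
      intro k Q hk1 hkn hQ
      have hmem : walkWeight A k (fun t : Fin (k+1) => Q t) / (k : ℝ) ∈
          { r | ∃ k, 1 ≤ k ∧ k ≤ Fintype.card (Fin n) ∧
            ∃ P : Fin (k + 1) → Fin n, P 0 = P (Fin.last k) ∧ r = walkWeight A k P / (k : ℝ) } := by
        refine ⟨k, hk1, by simpa using hkn, fun t : Fin (k+1) => Q t, ?_, rfl⟩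
        show Q ((0 : Fin (k+1)) : ℕ) = Q ((Fin.last k : Fin (k+1)) : ℕ)
        simpa using hQ
      have hle : walkWeight A k (fun t : Fin (k+1) => Q t) / (k : ℝ) ≤ maxCycleMean A :=
        le_csSup hbdd hmem
      have hle2 := hle.trans hrho
      have hwq := Stmt7Aux.walkWeight_of_Q A k Q
      have hab := Stmt7Aux.WAB A lam k Q
      have hk0 : (0:ℝ) < (k : ℝ) := by exact_mod_cast hk1
      rw [div_le_iff₀ hk0] at hle2
      rw [hwq, hab] at hle2
      have hcm : lam * (k : ℝ) = (k : ℝ) * lam := mul_comm _ _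
      linarith
    obtain ⟨y, hy0, hyl, heq⟩ := Stmt7Aux.construct hn lam (fun i j => A i j - lam) hcyc hK
    refine ⟨fun i => y i + (1 - lam),
      fun i => ⟨by show (0:ℝ) ≤ y i + (1 - lam); linarith [hy0 i, hlam.2],
        by show y i + (1 - lam) ≤ 1; linarith [hyl i]⟩,
      fun i => by show 1 - lam ≤ y i + (1 - lam); linarith [hy0 i], fun i => ?_⟩
    have h1 : lukSMul lam (fun i => y i + (1 - lam)) i = y i := by
      unfold lukSMul
      have he : lam + ((fun i => y i + (1 - lam)) i) - 1 = y i := by simp; ring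
      rw [he, max_eq_right (hy0 i)]
    rw [h1]
    unfold lukMulVec
    have hfun : (fun j => max 0 (A i j + (fun i => y i + (1 - lam)) j - 1))
        = fun j => max 0 ((fun i j => A i j - lam) i j + y j) := by
      funext j
      congr 1
      simp
      ring
    rw [hfun]
    exact heq i
end

section
/- Let A ∈ [0,1]^{n×n} and λ ∈ [0,1] satisfy ρ(A) < λ and max_{i,j} ((A^(λ))*)_{ij} ≤ λ. Then A has exactly one pure Łukasiewicz eigenvector associated with λ, namely the vector x with x_i = 1 − λ + max_j ((A^(λ))*)_{ij} for every i. -/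
open Finset

namespace S8
open Finset

variable {n : ℕ}

/-- Weight of the length-`k` walk `P 0 → P 1 → ⋯ → P k`. -/
noncomputable def ww (B : Fin n → Fin n → ℝ) (k : ℕ) (P : ℕ → Fin n) : ℝ :=
  ∑ t ∈ Finset.range k, B (P t) (P (t + 1))

lemma ww_zero (B : Fin n → Fin n → ℝ) (P : ℕ → Fin n) : ww B 0 P = 0 := by simp [ww]

lemma ww_succ (B : Fin n → Fin n → ℝ) (k : ℕ) (P : ℕ → Fin n) :
    ww B (k + 1) P = ww B k P + B (P k) (P (k + 1)) := Finset.sum_range_succ _ _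

lemma ww_succ' (B : Fin n → Fin n → ℝ) (k : ℕ) (P : ℕ → Fin n) :
    ww B (k + 1) P = B (P 0) (P 1) + ww B k (fun t => P (t + 1)) := by
  rw [ww, Finset.sum_range_succ', add_comm]; rfl

lemma ww_add (B : Fin n → Fin n → ℝ) (a b : ℕ) (P : ℕ → Fin n) :
    ww B (a + b) P = ww B a P + ww B b (fun t => P (a + t)) := by
  rw [ww, Finset.sum_range_add]
  rfl

lemma ww_congr (B : Fin n → Fin n → ℝ) (k : ℕ) {P Q : ℕ → Fin n}
    (h : ∀ u, u ≤ k → P u = Q u) : ww B k P = ww B k Q := by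
  apply Finset.sum_congr rfl
  intro t ht
  rw [Finset.mem_range] at ht
  rw [h t (by omega), h (t + 1) (by omega)]

/-- A bound on the entries of `B`. -/
noncomputable def Cb (B : Fin n → Fin n → ℝ) : ℝ := ⨆ p : Fin n × Fin n, B p.1 p.2

lemma le_fin_ciSup {m : ℕ} (f : Fin m → ℝ) (j : Fin m) : f j ≤ ⨆ l, f l :=
  le_ciSup (Set.Finite.bddAbove (Set.finite_range f)) j

lemma le_Cb (B : Fin n → Fin n → ℝ) (i j : Fin n) : B i j ≤ Cb B :=
  le_ciSup (f := fun p : Fin n × Fin n => B p.1 p.2)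
    (Set.Finite.bddAbove (Set.finite_range _)) (i, j)

lemma ww_le_of_le (B : Fin n → Fin n → ℝ) {C : ℝ} (hC : ∀ i j, B i j ≤ C)
    (k : ℕ) (P : ℕ → Fin n) : ww B k P ≤ k * C := by
  calc ww B k P ≤ ∑ _t ∈ Finset.range k, C := Finset.sum_le_sum (fun t _ => hC _ _)
  _ = k * C := by simp [Finset.sum_const]

/-- Set of weights of walks of length `k` from `i` to `j`. -/
def WSet (B : Fin n → Fin n → ℝ) (k : ℕ) (i j : Fin n) : Set ℝ :=
  (fun P : ℕ → Fin n => ww B k P) '' {P | P 0 = i ∧ P k = j}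

/-- Max weight over walks of length `k` from `i` to `j`. -/
noncomputable def maxw (B : Fin n → Fin n → ℝ) (k : ℕ) (i j : Fin n) : ℝ :=
  sSup (WSet B k i j)

lemma WSet_bdd (B : Fin n → Fin n → ℝ) (k : ℕ) (i j : Fin n) : BddAbove (WSet B k i j) := by
  refine ⟨k * Cb B, ?_⟩
  rintro r ⟨P, -, rfl⟩
  exact ww_le_of_le B (le_Cb B) k P

lemma WSet_nonempty (B : Fin n → Fin n → ℝ) {k : ℕ} (hk : k ≠ 0) (i j : Fin n) :
    (WSet B k i j).Nonempty := by
  refine ⟨ww B k (fun t => if t = 0 then i else j), ⟨fun t => if t = 0 then i else j, ⟨?_, ?_⟩, rfl⟩⟩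
  · simp
  · simp [hk]

lemma le_maxw (B : Fin n → Fin n → ℝ) {k : ℕ} (i j : Fin n) {P : ℕ → Fin n}
    (h0 : P 0 = i) (hk : P k = j) : ww B k P ≤ maxw B k i j :=
  le_csSup (WSet_bdd B k i j) ⟨P, ⟨h0, hk⟩, rfl⟩

lemma maxw_le (B : Fin n → Fin n → ℝ) {k : ℕ} (hk : k ≠ 0) {i j : Fin n} {r : ℝ}
    (H : ∀ P : ℕ → Fin n, P 0 = i → P k = j → ww B k P ≤ r) : maxw B k i j ≤ r := by
  apply csSup_le (WSet_nonempty B hk i j)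
  rintro s ⟨P, ⟨h0, hkk⟩, rfl⟩
  exact H P h0 hkk

lemma maxw_one (B : Fin n → Fin n → ℝ) (i j : Fin n) : maxw B 1 i j = B i j := by
  apply le_antisymm
  · apply maxw_le B one_ne_zero
    intro P h0 h1
    simp [ww, Finset.sum_range_one, h0, h1]
  · have := le_maxw B (P := fun t => if t = 0 then i else j) (k := 1) i j (by simp) (by simp)
    simpa [ww, Finset.sum_range_one] using this

lemma cons_ww (B : Fin n → Fin n → ℝ) (i : Fin n) (k : ℕ) (P : ℕ → Fin n) :
    ww B (k + 1) (fun t => if t = 0 then i else P (t - 1)) = B i (P 0) + ww B k P := by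
  rw [ww_succ']
  congr 1

lemma cons_maxw (B : Fin n → Fin n → ℝ) {k : ℕ} (hk : k ≠ 0) (i j l : Fin n) :
    B i j + maxw B k j l ≤ maxw B (k + 1) i l := by
  have h : maxw B k j l ≤ maxw B (k + 1) i l - B i j := by
    apply maxw_le B hk
    intro P h0 hkk
    have hcons := le_maxw B (P := fun t => if t = 0 then i else P (t - 1)) (k := k + 1)
      i l (by simp) (by simp [hkk])
    rw [cons_ww, h0] at hcons
    linarith
  linarith

lemma snoc_maxw (B : Fin n → Fin n → ℝ) {k : ℕ} (hk : k ≠ 0) (i j l : Fin n) :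
    maxw B k i j + B j l ≤ maxw B (k + 1) i l := by
  have h : maxw B k i j ≤ maxw B (k + 1) i l - B j l := by
    apply maxw_le B hk
    intro P h0 hkk
    set Q : ℕ → Fin n := fun t => if t ≤ k then P t else l with hQ
    have hQ0 : Q 0 = i := by simp only [hQ]; rw [if_pos (Nat.zero_le k)]; exact h0
    have hQl : Q (k + 1) = l := by simp only [hQ]; exact if_neg (by omega)
    have hQk : Q k = j := by simp only [hQ]; rw [if_pos le_rfl]; exact hkk
    have e1 : ww B k Q = ww B k P := ww_congr B k (fun u hu => if_pos hu)
    have hle := le_maxw B i l hQ0 hQl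
    rw [ww_succ, e1, hQk, hQl] at hle
    linarith
  linarith

lemma mpPow1_eq_maxw (hn : 0 < n) (B : Fin n → Fin n → ℝ) (m : ℕ) (i j : Fin n) :
    mpPow1 B m i j = maxw B (m + 1) i j := by
  induction m generalizing i with
  | zero =>
    rw [maxw_one]; rfl
  | succ m ih =>
    haveI : Nonempty (Fin n) := ⟨⟨0, hn⟩⟩
    show mpMul B (mpPow1 B m) i j = _
    rw [mpMul]
    apply le_antisymm
    · apply ciSup_le
      intro l
      rw [ih l]
      exact cons_maxw B (Nat.succ_ne_zero m) i l j
    · apply maxw_le B (Nat.succ_ne_zero (m + 1))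
      intro P h0 hkk
      rw [ww_succ', h0]
      have h1 : ww B (m + 1) (fun t => P (t + 1)) ≤ maxw B (m + 1) (P 1) j :=
        le_maxw B (P 1) j rfl hkk
      calc B i (P 1) + ww B (m + 1) (fun t => P (t + 1))
          ≤ B i (P 1) + mpPow1 B m (P 1) j := by rw [ih]; linarith
        _ ≤ ⨆ l, (B i l + mpPow1 B m l j) :=
            le_fin_ciSup (fun l => B i l + mpPow1 B m l j) (P 1)

lemma walkWeight_eq_ww (A : Fin n → Fin n → ℝ) (k : ℕ) (P : ℕ → Fin n) :
    walkWeight A k (fun t : Fin (k + 1) => P t.val) = ww A k P := by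
  rw [walkWeight, ww, ← Fin.sum_univ_eq_sum_range (fun t => A (P t) (P (t + 1)))]
  apply Finset.sum_congr rfl
  intro t _
  simp [Fin.coe_castSucc, Fin.val_succ]

lemma mcm_bdd (hn : 0 < n) (A : Fin n → Fin n → ℝ) :
    BddAbove { r | ∃ k, 1 ≤ k ∧ k ≤ Fintype.card (Fin n) ∧
      ∃ P : Fin (k + 1) → Fin n, P 0 = P (Fin.last k) ∧ r = walkWeight A k P / (k : ℝ) } := by
  refine ⟨Cb A, ?_⟩
  rintro r ⟨k, hk1, _, P, _, rfl⟩
  have hk0 : (0 : ℝ) < k := by exact_mod_cast hk1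
  rw [div_le_iff₀ hk0]
  have : walkWeight A k P ≤ ∑ _t : Fin k, Cb A :=
    Finset.sum_le_sum (fun t _ => le_Cb A _ _)
  simpa [mul_comm, Finset.sum_const, Finset.card_univ] using this

lemma cycle_le (hn : 0 < n) (A : Fin n → Fin n → ℝ) (lam : ℝ) :
    ∀ k, 1 ≤ k → k ≤ n → ∀ P : ℕ → Fin n, P 0 = P k →
      ww (fun i j => A i j - lam) k P ≤ (k : ℝ) * (maxCycleMean A - lam) := by
  intro k hk1 hkn P hcl
  have hsub : ww (fun i j => A i j - lam) k P = ww A k P - k * lam := by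
    rw [ww, ww, Finset.sum_sub_distrib]
    simp [Finset.sum_const, mul_comm]
  have hmem : ww A k P / (k : ℝ) ∈ { r | ∃ k', 1 ≤ k' ∧ k' ≤ Fintype.card (Fin n) ∧
      ∃ P' : Fin (k' + 1) → Fin n, P' 0 = P' (Fin.last k') ∧ r = walkWeight A k' P' / (k' : ℝ) } := by
    refine ⟨k, hk1, by simpa using hkn, fun t => P t.val, ?_, ?_⟩
    · simpa [Fin.val_last] using hcl
    · rw [walkWeight_eq_ww]
  have hle : ww A k P / (k : ℝ) ≤ maxCycleMean A := le_csSup (by simpa using mcm_bdd hn A) hmem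
  have hk0 : (0 : ℝ) < k := by exact_mod_cast hk1
  rw [div_le_iff₀ hk0] at hle
  rw [hsub]
  nlinarith

lemma reduce (B : Fin n → Fin n → ℝ) {k : ℕ} (hk : n ≤ k) (P : ℕ → Fin n) :
    ∃ s d m, 1 ≤ d ∧ d ≤ n ∧ k = s + d + m ∧
      (fun u => P (s + u)) 0 = (fun u => P (s + u)) d ∧
      ∃ Q : ℕ → Fin n, Q 0 = P 0 ∧ Q (s + m) = P k ∧
        ww B k P = ww B (s + m) Q + ww B d (fun u => P (s + u)) := by
  have hn : 0 < n := by
    rcases Nat.eq_zero_or_pos n with h | h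
    · exact absurd (P 0).isLt (by omega)
    · exact h
  -- pigeonhole
  obtain ⟨a, b, hab, heq⟩ := Fintype.exists_ne_map_eq_of_card_lt
    (fun u : Fin (n + 1) => P u.val) (by simp)
  have key : ∃ s t : ℕ, s < t ∧ t ≤ n ∧ P s = P t := by
    rcases lt_trichotomy a b with h | h | h
    · exact ⟨a.val, b.val, h, Nat.lt_succ_iff.mp b.isLt, heq⟩
    · exact absurd h hab
    · exact ⟨b.val, a.val, h, Nat.lt_succ_iff.mp a.isLt, heq.symm⟩
  obtain ⟨s, t, hst, htn, hPst⟩ := key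
  refine ⟨s, t - s, k - t, by omega, by omega, by omega, ?_, ?_⟩
  · simp only
    rw [Nat.add_sub_cancel' hst.le]
    exact hPst
  set d := t - s with hd
  set m := k - t with hm
  set Q : ℕ → Fin n := fun u => P (if u < s then u else u + d) with hQ
  have hsd : s + d = t := by omega
  have hQs : ∀ u, u ≤ s → Q u = P u := by
    intro u hu
    rcases lt_or_eq_of_le hu with h | h
    · simp only [hQ]; rw [if_pos h]
    · subst h
      simp only [hQ]
      rw [if_neg (lt_irrefl u), (by omega : u + d = t), ← hPst]
  refine ⟨Q, hQs 0 (Nat.zero_le s), ?_, ?_⟩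
  · simp only [hQ]
    rw [if_neg (by omega), (by omega : s + m + d = k)]
  · -- weight identity
    have e1 : ww B k P = ww B s P + ww B (d + m) (fun u => P (s + u)) := by
      rw [← ww_add, (by omega : s + (d + m) = k)]
    have e2 : ww B (d + m) (fun u => P (s + u))
        = ww B d (fun u => P (s + u)) + ww B m (fun u => P (s + (d + u))) := by
      rw [← ww_add]
    have e3 : ww B (s + m) Q = ww B s Q + ww B m (fun u => Q (s + u)) := ww_add B s m Q
    have e4 : ww B s Q = ww B s P := by
      apply ww_congr
      intro u hu
      exact hQs u hu
    have e5 : (fun u => Q (s + u)) = (fun u => P (s + (d + u))) := by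
      funext u
      simp only [hQ]
      rw [if_neg (by omega)]
      congr 1
      omega
    rw [e1, e2, e3, e4, e5]
    ring

lemma ww_bound (B : Fin n → Fin n → ℝ) {c C : ℝ} (hc : c ≤ 0) (hcC : c ≤ C)
    (hC : ∀ i j, B i j ≤ C)
    (hcyc : ∀ d, 1 ≤ d → d ≤ n → ∀ P : ℕ → Fin n, P 0 = P d → ww B d P ≤ (d : ℝ) * c) :
    ∀ k (P : ℕ → Fin n), ww B k P ≤ n * C - n * c + k * c := by
  intro k
  induction k using Nat.strong_induction_on with
  | _ k IH =>
    intro P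
    rcases lt_or_ge k n with hkn | hkn
    · have h1 : ww B k P ≤ k * C := ww_le_of_le B hC k P
      have hkc : (k : ℝ) ≤ n := by exact_mod_cast hkn.le
      nlinarith
    · obtain ⟨s, d, m, hd1, hdn, hksum, hclose, Q, hQ0, hQm, hwEq⟩ := reduce B hkn P
      have hcycle : ww B d (fun u => P (s + u)) ≤ (d : ℝ) * c :=
        hcyc d hd1 hdn _ hclose
      have hsm : s + m < k := by omega
      have hIH := IH (s + m) hsm Q
      have hcast : ((s + m : ℕ) : ℝ) * c + (d : ℝ) * c = (k : ℝ) * c := by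
        have : ((k : ℕ) : ℝ) = ((s : ℕ) : ℝ) + d + m := by exact_mod_cast congrArg Nat.cast hksum
        rw [this]; push_cast; ring
      rw [hwEq]
      push_cast at hcast hIH ⊢
      nlinarith [hcycle, hIH]

lemma decay (B : Fin n → Fin n → ℝ) {c C : ℝ} (hc : c < 0) (hcC : c ≤ C)
    (hC : ∀ i j, B i j ≤ C)
    (hcyc : ∀ d, 1 ≤ d → d ≤ n → ∀ P : ℕ → Fin n, P 0 = P d → ww B d P ≤ (d : ℝ) * c) :
    ∃ N, 1 ≤ N ∧ ∀ P : ℕ → Fin n, ww B N P ≤ -1 := by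
  set D := (n : ℝ) * C - n * c with hD
  obtain ⟨N0, hN0⟩ := exists_nat_gt ((D + 1) / (-c))
  refine ⟨N0 + 1, by omega, ?_⟩
  intro P
  have hb := ww_bound B hc.le hcC hC hcyc (N0 + 1) P
  have hN : (D + 1) / (-c) < ((N0 + 1 : ℕ) : ℝ) := by
    push_cast
    have : (N0 : ℝ) ≥ 0 := Nat.cast_nonneg N0
    linarith
  rw [div_lt_iff₀ (by linarith : (0 : ℝ) < -c)] at hN
  push_cast at hb hN
  nlinarith

/-- The candidate eigen-quantity `y i = max_j (B*)_{ij}`. -/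
noncomputable def yv (B : Fin n → Fin n → ℝ) (i : Fin n) : ℝ := ⨆ j, kleeneStar B i j

lemma star_diag_nonneg (B : Fin n → Fin n → ℝ) (i : Fin n) : 0 ≤ kleeneStar B i i := by
  rw [kleeneStar, if_pos rfl]
  exact le_max_left _ _

lemma y_nonneg (B : Fin n → Fin n → ℝ) (i : Fin n) : 0 ≤ yv B i :=
  (star_diag_nonneg B i).trans (le_fin_ciSup (fun j => kleeneStar B i j) i)

lemma star_le_y (B : Fin n → Fin n → ℝ) (i j : Fin n) : kleeneStar B i j ≤ yv B i :=
  le_fin_ciSup (fun j => kleeneStar B i j) j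

lemma pow_le_star (B : Fin n → Fin n → ℝ) {m : ℕ} (hm : m < n - 1) (i j : Fin n) :
    mpPow1 B m i j ≤ kleeneStar B i j := by
  have hidx : m < Fintype.card (Fin n) - 1 := by simpa using hm
  rw [kleeneStar]
  split_ifs with h
  · subst h
    refine le_max_of_le_right ?_
    exact le_ciSup (f := fun m' : Fin (Fintype.card (Fin n) - 1) => mpPow1 B (m' : ℕ) i i)
      (Set.Finite.bddAbove (Set.finite_range _)) ⟨m, hidx⟩
  · exact le_ciSup (f := fun m' : Fin (Fintype.card (Fin n) - 1) => mpPow1 B (m' : ℕ) i j)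
      (Set.Finite.bddAbove (Set.finite_range _)) ⟨m, hidx⟩

lemma walk_le_y (hn : 0 < n) (B : Fin n → Fin n → ℝ) {c : ℝ} (hc : c < 0)
    (hcyc : ∀ d, 1 ≤ d → d ≤ n → ∀ P : ℕ → Fin n, P 0 = P d → ww B d P ≤ (d : ℝ) * c) :
    ∀ k (P : ℕ → Fin n), ww B k P ≤ yv B (P 0) := by
  intro k
  induction k using Nat.strong_induction_on with
  | _ k IH =>
    intro P
    rcases Nat.eq_zero_or_pos k with rfl | hk1
    · rw [ww_zero]; exact y_nonneg B (P 0)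
    rcases lt_or_ge k n with hkn | hkn
    · have h1 : ww B k P ≤ maxw B k (P 0) (P k) := le_maxw B (P 0) (P k) rfl rfl
      have h2 : maxw B k (P 0) (P k) = mpPow1 B (k - 1) (P 0) (P k) := by
        rw [mpPow1_eq_maxw hn]
        congr 1
        omega
      calc ww B k P ≤ mpPow1 B (k - 1) (P 0) (P k) := h2 ▸ h1
        _ ≤ kleeneStar B (P 0) (P k) := pow_le_star B (by omega) _ _
        _ ≤ yv B (P 0) := star_le_y B _ _
    · obtain ⟨s, d, m, hd1, hdn, hksum, hclose, Q, hQ0, hQm, hwEq⟩ := reduce B hkn P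
      have hcycle : ww B d (fun u => P (s + u)) ≤ (d : ℝ) * c :=
        hcyc d hd1 hdn _ hclose
      have hdc : (d : ℝ) * c ≤ 0 := by
        have : (0 : ℝ) ≤ d := Nat.cast_nonneg d
        nlinarith
      have hIH := IH (s + m) (by omega) Q
      rw [hQ0] at hIH
      rw [hwEq]
      linarith

lemma maxw_le_y (hn : 0 < n) (B : Fin n → Fin n → ℝ) {c : ℝ} (hc : c < 0)
    (hcyc : ∀ d, 1 ≤ d → d ≤ n → ∀ P : ℕ → Fin n, P 0 = P d → ww B d P ≤ (d : ℝ) * c)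
    {k : ℕ} (hk : k ≠ 0) (i j : Fin n) : maxw B k i j ≤ yv B i := by
  apply maxw_le B hk
  intro P h0 _
  rw [← h0]
  exact walk_le_y hn B hc hcyc k P

lemma max0_ciSup (hn : 0 < n) (f : Fin n → ℝ) :
    (⨆ j, max 0 (f j)) = max 0 (⨆ j, f j) := by
  haveI : Nonempty (Fin n) := ⟨⟨0, hn⟩⟩
  set j0 : Fin n := ⟨0, hn⟩
  apply le_antisymm
  · apply ciSup_le
    intro j
    exact max_le (le_max_left _ _) (le_max_of_le_right (le_fin_ciSup f j))
  · apply max_le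
    · exact (le_max_left 0 (f j0)).trans (le_fin_ciSup (fun j => max 0 (f j)) j0)
    · apply ciSup_le
      intro j
      exact (le_max_right 0 (f j)).trans (le_fin_ciSup (fun j => max 0 (f j)) j)

lemma add_ciSup (hn : 0 < n) (a : ℝ) (f : Fin n → ℝ) :
    a + (⨆ j, f j) = ⨆ j, (a + f j) := by
  haveI : Nonempty (Fin n) := ⟨⟨0, hn⟩⟩
  apply le_antisymm
  · have h : (⨆ j, f j) ≤ (⨆ j, (a + f j)) - a := by
      apply ciSup_le
      intro j
      have := le_fin_ciSup (fun j => a + f j) j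
      linarith
    linarith
  · apply ciSup_le
    intro j
    have := le_fin_ciSup f j
    linarith

lemma add_max0 (a b : ℝ) : a + max 0 b = max a (a + b) := by
  rcases le_total b 0 with h | h
  · rw [max_eq_left h, max_eq_left (by linarith), add_zero]
  · rw [max_eq_right h, max_eq_right (by linarith)]

lemma edge_le_y (hn : 0 < n) (B : Fin n → Fin n → ℝ) {c : ℝ} (hc : c < 0)
    (hcyc : ∀ d, 1 ≤ d → d ≤ n → ∀ P : ℕ → Fin n, P 0 = P d → ww B d P ≤ (d : ℝ) * c)
    (i j : Fin n) : B i j ≤ yv B i := by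
  rw [← maxw_one B i j]
  exact maxw_le_y hn B hc hcyc one_ne_zero i j

lemma fixed_point (hn : 0 < n) (B : Fin n → Fin n → ℝ) {c : ℝ} (hc : c < 0)
    (hcyc : ∀ d, 1 ≤ d → d ≤ n → ∀ P : ℕ → Fin n, P 0 = P d → ww B d P ≤ (d : ℝ) * c)
    (i : Fin n) : (⨆ j, max 0 (B i j + yv B j)) = yv B i := by
  haveI : Nonempty (Fin n) := ⟨⟨0, hn⟩⟩
  apply le_antisymm
  · apply ciSup_le
    intro j
    apply max_le (y_nonneg B i)
    rw [yv, add_ciSup hn]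
    apply ciSup_le
    intro l
    -- B i j + kleeneStar B j l ≤ yv B i
    rw [kleeneStar]
    have hpow : ∀ m : Fin (Fintype.card (Fin n) - 1),
        B i j + mpPow1 B (m : ℕ) j l ≤ yv B i := by
      intro m
      rw [mpPow1_eq_maxw hn]
      have := cons_maxw B (Nat.succ_ne_zero (m : ℕ)) i j l
      have h2 := maxw_le_y hn B hc hcyc (Nat.succ_ne_zero ((m : ℕ) + 1)) i l
      linarith
    have hBij : B i j ≤ yv B i := edge_le_y hn B hc hcyc i j
    have hS : ∀ (g : Fin (Fintype.card (Fin n) - 1) → ℝ),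
        (∀ m, B i j + g m ≤ yv B i) → B i j + (⨆ m, g m) ≤ yv B i := by
      intro g hg
      have : (⨆ m, g m) ≤ yv B i - B i j :=
        Real.iSup_le (fun m => by linarith [hg m]) (by linarith)
      linarith
    split_ifs with h
    · subst h
      rw [add_max0]
      exact max_le hBij (hS _ hpow)
    · exact hS _ hpow
  · -- yv B i ≤ ⨆ j, max 0 (B i j + yv B j)
    set R := ⨆ j, max 0 (B i j + yv B j) with hR
    have hR0 : 0 ≤ R := by
      refine le_trans (le_max_left 0 (B i i + yv B i)) ?_
      exact le_fin_ciSup (fun j => max 0 (B i j + yv B j)) i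
    apply ciSup_le
    intro j
    have hpow : ∀ m : Fin (Fintype.card (Fin n) - 1), mpPow1 B (m : ℕ) i j ≤ R := by
      intro m
      rw [mpPow1_eq_maxw hn]
      apply maxw_le B (Nat.succ_ne_zero (m : ℕ))
      intro P h0 hkk
      rw [ww_succ', h0]
      have h1 : ww B (m : ℕ) (fun t => P (t + 1)) ≤ yv B (P 1) := by
        have := walk_le_y hn B hc hcyc (m : ℕ) (fun t => P (t + 1))
        simpa using this
      calc B i (P 1) + ww B (m : ℕ) (fun t => P (t + 1))
          ≤ B i (P 1) + yv B (P 1) := by linarith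
        _ ≤ max 0 (B i (P 1) + yv B (P 1)) := le_max_right _ _
        _ ≤ R := le_fin_ciSup (fun j => max 0 (B i j + yv B j)) (P 1)
    rw [kleeneStar]
    split_ifs with h
    · subst h
      exact max_le hR0 (Real.iSup_le hpow hR0)
    · exact Real.iSup_le hpow hR0

lemma unique_z (hn : 0 < n) (B : Fin n → Fin n → ℝ) {c C lam : ℝ} (hc : c < 0) (hcC : c ≤ C)
    (hC : ∀ i j, B i j ≤ C) (hlam1 : lam ≤ 1)
    (hcyc : ∀ d, 1 ≤ d → d ≤ n → ∀ P : ℕ → Fin n, P 0 = P d → ww B d P ≤ (d : ℝ) * c)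
    (z : Fin n → ℝ) (hz0 : ∀ i, 0 ≤ z i) (hzl : ∀ i, z i ≤ lam)
    (hzfix : ∀ i, z i = ⨆ j, max 0 (B i j + z j)) : z = yv B := by
  haveI : Nonempty (Fin n) := ⟨⟨0, hn⟩⟩
  -- walks bound: ww B k P + z (P k) ≤ z (P 0)
  have key : ∀ k (P : ℕ → Fin n), ww B k P + z (P k) ≤ z (P 0) := by
    intro k
    induction k with
    | zero => intro P; rw [ww_zero]; linarith
    | succ k ih =>
      intro P
      have h1 := ih (fun t => P (t + 1))
      have h2 : B (P 0) (P 1) + z (P 1) ≤ z (P 0) := by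
        rw [hzfix (P 0)]
        exact le_trans (le_max_right 0 _) (le_fin_ciSup (fun j => max 0 (B (P 0) j + z j)) (P 1))
      rw [ww_succ']
      linarith
  have hwz : ∀ k (P : ℕ → Fin n), ww B k P ≤ z (P 0) := by
    intro k P
    have := key k P
    have := hz0 (P k)
    linarith
  -- yv ≤ z
  have hyz : ∀ i, yv B i ≤ z i := by
    intro i
    have hmaxw : ∀ k, k ≠ 0 → ∀ j, maxw B k i j ≤ z i := by
      intro k hk j
      apply maxw_le B hk
      intro P h0 _
      rw [← h0]
      exact hwz k P
    apply ciSup_le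
    intro j
    rw [kleeneStar]
    have hpow : ∀ m : Fin (Fintype.card (Fin n) - 1), mpPow1 B (m : ℕ) i j ≤ z i := by
      intro m
      rw [mpPow1_eq_maxw hn]
      exact hmaxw _ (Nat.succ_ne_zero _) j
    split_ifs with h
    · subst h
      exact max_le (hz0 i) (Real.iSup_le hpow (hz0 i))
    · exact Real.iSup_le hpow (hz0 i)
  -- z ≤ yv
  have main : ∀ N, 1 ≤ N → ∀ i, z i ≤ max (yv B i) (⨆ j, (maxw B N i j + z j)) := by
    intro N hN
    induction N, hN using Nat.le_induction with
    | base =>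
      intro i
      rw [hzfix i]
      apply ciSup_le
      intro j
      apply max_le
      · exact (y_nonneg B i).trans (le_max_left _ _)
      · refine le_trans ?_ (le_max_right _ _)
        rw [← maxw_one B i j]
        exact le_fin_ciSup (fun j => maxw B 1 i j + z j) j
    | succ N hN1 ih =>
      intro i
      refine (ih i).trans (max_le (le_max_left _ _) ?_)
      apply ciSup_le
      intro j
      rw [hzfix j, max0_ciSup hn, add_max0]
      apply max_le
      · exact (maxw_le_y hn B hc hcyc (by omega) i j).trans (le_max_left _ _)
      · rw [add_ciSup hn]
        apply ciSup_le
        intro l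
        have hsnoc := snoc_maxw B (by omega : N ≠ 0) i j l
        have hle : maxw B N i j + (B j l + z l) ≤ maxw B (N + 1) i l + z l := by linarith
        refine hle.trans (le_trans ?_ (le_max_right _ _))
        exact le_fin_ciSup (fun l => maxw B (N + 1) i l + z l) l
  have hzy : ∀ i, z i ≤ yv B i := by
    intro i
    obtain ⟨N, hN1, hNd⟩ := decay B hc hcC hC hcyc
    have h := main N hN1 i
    have hsup : (⨆ j, (maxw B N i j + z j)) ≤ yv B i := by
      apply ciSup_le
      intro j
      have h1 : maxw B N i j ≤ -1 := by
        apply maxw_le B (by omega)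
        intro P _ _
        exact hNd P
      have := hzl j
      have := y_nonneg B i
      linarith
    rw [max_eq_left hsup] at h  -- wrong orientation? max (yv) (sup) with sup ≤ yv
    exact h
  funext i
  exact le_antisymm (hzy i) (hyz i)

end S8

/-- if `ρ(A) < λ` and `max_{i,j} ((A^{(λ)})*)_{ij} ≤ λ` then the unique pure
Łukasiewicz eigenvector associated with `λ` is `x_i = 1 - λ + max_j ((A^{(λ)})*)_{ij}`. -/
theorem stmt8 {n : ℕ} (hn : 0 < n) (A : Fin n → Fin n → ℝ)
    (hA : ∀ i j, A i j ∈ Set.Icc (0 : ℝ) 1) (lam : ℝ) (hlam : lam ∈ Set.Icc (0 : ℝ) 1)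
    (h1 : maxCycleMean A < lam)
    (h2 : ∀ i j, kleeneStar (fun i j => A i j - lam) i j ≤ lam) :
    ∀ x : Fin n → ℝ,
      ((∀ i, x i ∈ Set.Icc (0 : ℝ) 1) ∧ (∀ i, 1 - lam ≤ x i) ∧
        (∀ i, lukMulVec A x i = lukSMul lam x i)) ↔
      x = fun i => 1 - lam + ⨆ j, kleeneStar (fun i j => A i j - lam) i j := by
  intro x
  set B : Fin n → Fin n → ℝ := fun i j => A i j - lam with hB
  haveI : Nonempty (Fin n) := ⟨⟨0, hn⟩⟩
  have hc : maxCycleMean A - lam < 0 := by linarith [h1]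
  have hC : ∀ i j, B i j ≤ max (S8.Cb B) (maxCycleMean A - lam) :=
    fun i j => (S8.le_Cb B i j).trans (le_max_left _ _)
  have hcC : maxCycleMean A - lam ≤ max (S8.Cb B) (maxCycleMean A - lam) := le_max_right _ _
  have hcyc : ∀ d, 1 ≤ d → d ≤ n → ∀ P : ℕ → Fin n, P 0 = P d →
      S8.ww B d P ≤ (d : ℝ) * (maxCycleMean A - lam) :=
    fun d hd1 hd2 P hP => S8.cycle_le hn A lam d hd1 hd2 P hP
  have hy0 : ∀ i, 0 ≤ S8.yv B i := S8.y_nonneg B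
  have hyl : ∀ i, S8.yv B i ≤ lam := fun i =>
    show (⨆ j, kleeneStar B i j) ≤ lam from ciSup_le (h2 i)
  constructor
  · rintro ⟨hx01, hxpure, heig⟩
    set z : Fin n → ℝ := fun i => x i - (1 - lam) with hz
    have hz0 : ∀ i, 0 ≤ z i := fun i => by
      show (0 : ℝ) ≤ x i - (1 - lam)
      linarith [hxpure i]
    have hzl : ∀ i, z i ≤ lam := fun i => by
      show x i - (1 - lam) ≤ lam
      linarith [(hx01 i).2]
    have hzfix : ∀ i, z i = ⨆ j, max 0 (B i j + z j) := by
      intro i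
      have h := heig i
      rw [lukMulVec, lukSMul] at h
      have hL : ∀ j, A i j + x j - 1 = B i j + z j := by
        intro j
        show A i j + x j - 1 = (A i j - lam) + (x j - (1 - lam))
        ring
      simp only [hL] at h
      have hzi : lam + x i - 1 = z i := by
        show lam + x i - 1 = x i - (1 - lam)
        ring
      rw [hzi, max_eq_right (hz0 i)] at h
      exact h.symm
    have huniq := S8.unique_z hn B hc hcC hC hlam.2 hcyc z hz0 hzl hzfix
    funext i
    have hzy : z i = S8.yv B i := congrFun huniq i
    have hzi : z i = x i - (1 - lam) := rfl
    show x i = 1 - lam + S8.yv B i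
    linarith
  · rintro rfl
    refine ⟨?_, ?_, ?_⟩
    · intro i
      refine ⟨?_, ?_⟩
      · show (0 : ℝ) ≤ 1 - lam + S8.yv B i
        linarith [hy0 i, hlam.2]
      · show 1 - lam + S8.yv B i ≤ 1
        linarith [hyl i]
    · intro i
      show 1 - lam ≤ 1 - lam + S8.yv B i
      linarith [hy0 i]
    · intro i
      have hfp := S8.fixed_point hn B hc hcyc i
      show (⨆ j, max 0 (A i j + (1 - lam + ⨆ l, kleeneStar B j l) - 1))
          = max 0 (lam + (1 - lam + ⨆ l, kleeneStar B i l) - 1)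
      have hL : ∀ j, A i j + (1 - lam + ⨆ l, kleeneStar B j l) - 1 = B i j + S8.yv B j := by
        intro j
        show A i j + (1 - lam + S8.yv B j) - 1 = (A i j - lam) + S8.yv B j
        ring
      have hR : lam + (1 - lam + ⨆ l, kleeneStar B i l) - 1 = S8.yv B i := by
        show lam + (1 - lam + S8.yv B i) - 1 = S8.yv B i
        ring
      rw [hR, max_eq_right (hy0 i)]
      simp only [hL]
      exact hfp
end

section
/- Let A ∈ [0,1]^{n×n} and λ ∈ (0,1]. Then A has a pure Łukasiewicz eigenvector associated with λ if and only if the weighted digraph D(A^(λ)) is λ-secure, i.e., every walk in D(A^(λ)) has weight at most λ. -/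
open Finset

lemma walkWeight_succ {ι : Type*} (B : ι → ι → ℝ) (len : ℕ) (P : Fin (len + 2) → ι) :
    walkWeight B (len + 1) P = B (P 0) (P 1) + walkWeight B len (fun t => P t.succ) := by
  unfold walkWeight
  rw [Fin.sum_univ_succ]
  simp [Fin.succ_castSucc, -Fin.castSucc_succ]

lemma walkWeight_telescope {ι : Type*} (x : ι → ℝ) :
    ∀ (len : ℕ) (P : Fin (len + 1) → ι),
      walkWeight (fun i j => x i - x j) len P = x (P 0) - x (P (Fin.last len))
  | 0, P => by simp [walkWeight]
  | (len+1), P => by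
    rw [walkWeight_succ, walkWeight_telescope x len]
    simp only [Fin.succ_zero_eq_one, Fin.succ_last]
    ring

/-- for `λ ∈ (0,1]`, `A` has a pure Łukasiewicz eigenvector associated with `λ` iff
`D(A^{(λ)})` is `λ`-secure, i.e. every walk in `D(A^{(λ)})` has weight at most `λ`. -/
theorem stmt9 {n : ℕ} (hn : 0 < n) (A : Fin n → Fin n → ℝ)
    (hA : ∀ i j, A i j ∈ Set.Icc (0 : ℝ) 1) (lam : ℝ) (hlam0 : 0 < lam) (hlam1 : lam ≤ 1) :
    (∃ x : Fin n → ℝ, (∀ i, x i ∈ Set.Icc (0 : ℝ) 1) ∧ (∀ i, 1 - lam ≤ x i) ∧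
        ∀ i, lukMulVec A x i = lukSMul lam x i) ↔
      ∀ (len : ℕ) (P : Fin (len + 1) → Fin n),
        walkWeight (fun i j => A i j - lam) len P ≤ lam := by
  haveI : Nonempty (Fin n) := ⟨⟨0, hn⟩⟩
  set B : Fin n → Fin n → ℝ := fun i j => A i j - lam with hB
  constructor
  · rintro ⟨x, hx01, hxl, hex⟩ len P
    have key : ∀ i j, B i j ≤ x i - x j := by
      intro i j
      have h1 : lukSMul lam x i = lam + x i - 1 := by
        unfold lukSMul
        rw [max_eq_right]
        linarith [hxl i]
      have h2 : A i j + x j - 1 ≤ lukMulVec A x i := by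
        have h := le_ciSup (f := fun j => max 0 (A i j + x j - 1))
          ((Set.finite_range _).bddAbove) j
        exact le_trans (le_max_right _ _) h
      have h3 : lukMulVec A x i = lam + x i - 1 := by rw [hex i, h1]
      simp only [hB]
      linarith
    calc walkWeight B len P ≤ walkWeight (fun i j => x i - x j) len P :=
          Finset.sum_le_sum fun t _ => key _ _
      _ = x (P 0) - x (P (Fin.last len)) := walkWeight_telescope x len P
      _ ≤ lam := by
          have := (hx01 (P 0)).2
          have := hxl (P (Fin.last len))
          linarith
  · intro hsec
    set S : Fin n → Set ℝ := fun i =>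
      {w | ∃ len, ∃ P : Fin (len+1) → Fin n, P 0 = i ∧ w = walkWeight B len P} with hS
    have hzero : ∀ i, (0:ℝ) ∈ S i := fun i =>
      ⟨0, fun _ => i, rfl, by simp [walkWeight]⟩
    have hbdd : ∀ i, ∀ w ∈ S i, w ≤ lam := by
      rintro i w ⟨len, P, hP0, rfl⟩
      exact hsec len P
    have hbddA : ∀ i, BddAbove (S i) := fun i => ⟨lam, fun w hw => hbdd i w hw⟩
    set m : Fin n → ℝ := fun i => sSup (S i) with hm
    have hm0 : ∀ i, 0 ≤ m i := fun i => le_csSup (hbddA i) (hzero i)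
    have hml : ∀ i, m i ≤ lam := fun i => csSup_le ⟨0, hzero i⟩ (hbdd i)
    have hstep : ∀ i j, B i j + m j ≤ m i := by
      intro i j
      have hmem : ∀ w ∈ S j, B i j + w ≤ m i := by
        rintro w ⟨len, P, hP0, rfl⟩
        apply le_csSup (hbddA i)
        refine ⟨len + 1, Fin.cons i P, Fin.cons_zero _ _, ?_⟩
        rw [walkWeight_succ]
        have hQ1 : (Fin.cons i P : Fin (len+2) → Fin n) 1 = j := by
          rw [show (1 : Fin (len+2)) = (0 : Fin (len+1)).succ by simp]
          rw [Fin.cons_succ, hP0]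
        have hQt : (fun t : Fin (len+1) => (Fin.cons i P : Fin (len+2) → Fin n) t.succ) = P := by
          funext t; simp
        rw [hQ1, hQt, Fin.cons_zero]
      have h2 : m j ≤ m i - B i j :=
        csSup_le ⟨0, hzero j⟩ (fun w hw => by linarith [hmem w hw])
      linarith
    refine ⟨fun i => 1 - lam + m i, ?_, ?_, ?_⟩
    · intro i
      exact ⟨show (0:ℝ) ≤ 1 - lam + m i by linarith [hm0 i],
        show 1 - lam + m i ≤ 1 by linarith [hml i]⟩
    · intro i
      show 1 - lam ≤ 1 - lam + m i
      linarith [hm0 i]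
    · intro i
      have hRHS : lukSMul lam (fun i => 1 - lam + m i) i = m i := by
        unfold lukSMul
        simp only
        rw [show lam + (1 - lam + m i) - 1 = m i by ring, max_eq_right (hm0 i)]
      have hLHS : lukMulVec A (fun i => 1 - lam + m i) i = m i := by
        unfold lukMulVec
        apply le_antisymm
        · apply ciSup_le
          intro j
          apply max_le (hm0 i)
          have := hstep i j
          simp only [hB] at this
          show A i j + (1 - lam + m j) - 1 ≤ m i
          linarith
        · have : m i ≤ ⨆ j, max 0 (A i j + (1 - lam + m j) - 1) := by
            apply csSup_le ⟨0, hzero i⟩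
            rintro w ⟨len, P, hP0, rfl⟩
            cases len with
            | zero =>
              have h0 : walkWeight B 0 P = 0 := by simp [walkWeight]
              rw [h0]
              calc (0:ℝ) ≤ max 0 (A i i + (1 - lam + m i) - 1) := le_max_left _ _
                _ ≤ _ := le_ciSup (f := fun j => max 0 (A i j + (1 - lam + m j) - 1)) ((Set.finite_range _).bddAbove) i
            | succ len =>
              rw [walkWeight_succ, hP0]
              have hw' : walkWeight B len (fun t => P t.succ) ≤ m (P 1) :=
                le_csSup (hbddA _) ⟨len, fun t => P t.succ, rfl, rfl⟩
              calc B i (P 1) + walkWeight B len (fun t => P t.succ)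
                  ≤ B i (P 1) + m (P 1) := by linarith
                _ ≤ max 0 (A i (P 1) + (1 - lam + m (P 1)) - 1) := by
                    simp only [hB]
                    have := le_max_right (0:ℝ) (A i (P 1) + (1 - lam + m (P 1)) - 1)
                    linarith
                _ ≤ _ := le_ciSup (f := fun j => max 0 (A i j + (1 - lam + m j) - 1)) ((Set.finite_range _).bddAbove) (P 1)
          exact this
      rw [hLHS, hRHS]
end
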